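/- arXiv:math/0506124 — 9 statements merged into one kernel-verified Lean document; each statement's English description precedes it below -/
import Mathlib

section
/- For Hermitian positive definite matrices A and B, log(B) - log(A) = ∫₀^∞ (A + τI)⁻¹ (B - A) (B + τI)⁻¹ dτ. -/
open MeasureTheory Matrix Set
open scoped ComplexOrder

lemma myIntegrable {a : ℝ} (ha : 0 < a) :
    IntegrableOn (fun τ : ℝ => (a+τ)⁻¹ - (1+τ)⁻¹) (Set.Ioi 0) := by
  have hcont : ContinuousOn (fun τ : ℝ => (a+τ)⁻¹ - (1+τ)⁻¹) (Set.Ici 0) := by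
    apply ContinuousOn.sub
    · exact (continuousOn_const.add continuousOn_id).inv₀
        (fun x hx => by have : (0:ℝ) ≤ x := hx; exact (show (0:ℝ) < a + x by positivity).ne')
    · exact (continuousOn_const.add continuousOn_id).inv₀
        (fun x hx => by have : (0:ℝ) ≤ x := hx; exact (show (0:ℝ) < 1 + x by positivity).ne')
  have h1 : IntegrableOn (fun τ : ℝ => (a+τ)⁻¹ - (1+τ)⁻¹) (Set.Ioc 0 1) := by
    apply (hcont.mono (Icc_subset_Ici_self : Icc (0:ℝ) 1 ⊆ Ici 0)).integrableOn_Icc.mono_set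
    exact Ioc_subset_Icc_self
  have h2 : IntegrableOn (fun τ : ℝ => (a+τ)⁻¹ - (1+τ)⁻¹) (Set.Ioi 1) := by
    have hb : IntegrableOn (fun τ : ℝ => |1-a| * τ^(-2:ℝ)) (Set.Ioi 1) :=
      (integrableOn_Ioi_rpow_of_lt (by norm_num) one_pos).const_mul _
    refine Integrable.mono hb ((hcont.mono ?_).aestronglyMeasurable measurableSet_Ioi) ?_
    · exact fun x hx => Set.mem_Ici.mpr (le_of_lt (lt_trans one_pos (Set.mem_Ioi.mp hx)))
    · filter_upwards [ae_restrict_mem measurableSet_Ioi] with x hx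
      have hx1 : (1:ℝ) < x := hx
      have hx0 : (0:ℝ) < x := lt_trans one_pos hx1
      have key : (a+x)⁻¹ - (1+x)⁻¹ = (1-a) / ((a+x)*(1+x)) := by
        field_simp
        ring
      have hxr : x^(-2:ℝ) = (x*x)⁻¹ := by
        rw [Real.rpow_neg hx0.le]
        norm_num
        rw [sq]
        exact mul_inv x x
      rw [Real.norm_eq_abs, Real.norm_eq_abs, key, abs_div, abs_mul,
        abs_of_pos (by positivity : (0:ℝ) < a+x), abs_of_pos (by positivity : (0:ℝ) < 1+x),
        abs_mul, abs_of_pos (by rw [hxr]; positivity : (0:ℝ) < x^(-2:ℝ)), hxr, div_eq_mul_inv]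
      rw [abs_abs]
      apply mul_le_mul_of_nonneg_left _ (abs_nonneg _)
      apply inv_anti₀ (by positivity)
      have := mul_le_mul (by linarith : x ≤ a+x) (by linarith : x ≤ 1+x) hx0.le (by positivity)
      linarith
  have : Set.Ioi (0:ℝ) = Set.Ioc 0 1 ∪ Set.Ioi 1 := (Set.Ioc_union_Ioi_eq_Ioi (by norm_num)).symm
  rw [this]
  exact h1.union h2

lemma myIntegral {a : ℝ} (ha : 0 < a) :
    ∫ τ in Set.Ioi (0:ℝ), ((a+τ)⁻¹ - (1+τ)⁻¹) = - Real.log a := by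
  have hderiv : ∀ x ∈ Set.Ici (0:ℝ),
      HasDerivAt (fun τ => Real.log (a+τ) - Real.log (1+τ)) ((a+x)⁻¹ - (1+x)⁻¹) x := by
    intro x hx
    have h0 : (0:ℝ) ≤ x := hx
    have d1 : HasDerivAt (fun τ : ℝ => Real.log (a+τ)) (a+x)⁻¹ x := by
      have := ((hasDerivAt_id x).const_add a).log (by positivity)
      simpa using this
    have d2 : HasDerivAt (fun τ : ℝ => Real.log (1+τ)) (1+x)⁻¹ x := by
      have := ((hasDerivAt_id x).const_add 1).log (by positivity)
      simpa using this
    exact d1.sub d2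
  have htend : Filter.Tendsto (fun τ => Real.log (a+τ) - Real.log (1+τ)) Filter.atTop (nhds 0) := by
    have h1 : Filter.Tendsto (fun τ : ℝ => 1 + (a-1)/(1+τ)) Filter.atTop (nhds 1) := by
      have : Filter.Tendsto (fun τ : ℝ => (a-1)/(1+τ)) Filter.atTop (nhds 0) := by
        apply Filter.Tendsto.div_atTop tendsto_const_nhds
        exact Filter.tendsto_atTop_add_const_left _ 1 Filter.tendsto_id
      simpa using tendsto_const_nhds.add this
    have h2 := (Real.continuousAt_log one_ne_zero).tendsto.comp h1
    rw [Real.log_one] at h2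
    apply h2.congr'
    filter_upwards [Filter.eventually_gt_atTop 0] with x hx
    have h1x : (0:ℝ) < 1 + x := by linarith
    have hax : (0:ℝ) < a + x := by linarith
    simp only [Function.comp]
    rw [← Real.log_div hax.ne' h1x.ne']
    congr 1
    field_simp
    ring
  have := integral_Ioi_of_hasDerivAt_of_tendsto' hderiv (myIntegrable ha) htend
  rw [this]
  simp

lemma spectral_add_smul {n : ℕ} {A : Matrix (Fin n) (Fin n) ℂ} (hA : A.PosDef) (τ : ℝ) :
    A + (τ:ℂ) • (1 : Matrix (Fin n) (Fin n) ℂ) =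
      (hA.1.eigenvectorUnitary : Matrix (Fin n) (Fin n) ℂ) *
        diagonal (fun k => (hA.1.eigenvalues k : ℂ) + τ) *
        star (hA.1.eigenvectorUnitary : Matrix (Fin n) (Fin n) ℂ) := by
  set U := (hA.1.eigenvectorUnitary : Matrix (Fin n) (Fin n) ℂ) with hU
  have hUU : U * star U = 1 := Matrix.mem_unitaryGroup_iff.mp hA.1.eigenvectorUnitary.2
  have h1 : (τ:ℂ) • (1 : Matrix (Fin n) (Fin n) ℂ) = U * ((τ:ℂ) • 1) * star U := by
    rw [mul_smul_comm, mul_one, smul_mul_assoc, hUU]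
  conv_lhs => rw [hA.1.spectral_theorem, Unitary.conjStarAlgAut_apply, h1]
  rw [← Matrix.add_mul, ← Matrix.mul_add]
  congr 1
  congr 1
  rw [Matrix.smul_one_eq_diagonal, Matrix.diagonal_add]
  rfl

lemma inv_spectral {n : ℕ} {A : Matrix (Fin n) (Fin n) ℂ} (hA : A.PosDef) {τ : ℝ} (hτ : 0 < τ) :
    (A + (τ:ℂ) • (1 : Matrix (Fin n) (Fin n) ℂ))⁻¹ =
      (hA.1.eigenvectorUnitary : Matrix (Fin n) (Fin n) ℂ) *
        diagonal (fun k => ((hA.1.eigenvalues k : ℂ) + τ)⁻¹) *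
        star (hA.1.eigenvectorUnitary : Matrix (Fin n) (Fin n) ℂ) := by
  set U := (hA.1.eigenvectorUnitary : Matrix (Fin n) (Fin n) ℂ) with hU
  have hUU : U * star U = 1 := Matrix.mem_unitaryGroup_iff.mp hA.1.eigenvectorUnitary.2
  have hUsU : star U * U = 1 := Matrix.mem_unitaryGroup_iff'.mp hA.1.eigenvectorUnitary.2
  apply Matrix.inv_eq_right_inv
  rw [spectral_add_smul hA τ]
  have hne : ∀ k, (hA.1.eigenvalues k : ℂ) + τ ≠ 0 := by
    intro k
    have hk : 0 < hA.1.eigenvalues k + τ := by have := hA.eigenvalues_pos k; linarith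
    intro h
    rw [show (hA.1.eigenvalues k : ℂ) + τ = ((hA.1.eigenvalues k + τ : ℝ) : ℂ) by push_cast; ring] at h
    exact hk.ne' (by exact_mod_cast h)
  calc U * diagonal (fun k => (hA.1.eigenvalues k : ℂ) + τ) * star U *
        (U * diagonal (fun k => ((hA.1.eigenvalues k : ℂ) + τ)⁻¹) * star U)
      = U * (diagonal (fun k => (hA.1.eigenvalues k : ℂ) + τ) * (star U * U) *
          diagonal (fun k => ((hA.1.eigenvalues k : ℂ) + τ)⁻¹)) * star U := by
        simp only [Matrix.mul_assoc]
    _ = 1 := by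
        rw [hUsU, mul_one, diagonal_mul_diagonal]
        rw [show (fun k => ((hA.1.eigenvalues k : ℂ) + τ) * ((hA.1.eigenvalues k : ℂ) + τ)⁻¹)
            = fun _ => (1:ℂ) from funext fun k => mul_inv_cancel₀ (hne k)]
        rw [diagonal_one, mul_one, hUU]

lemma conj_entry {n : ℕ} (U : Matrix (Fin n) (Fin n) ℂ) (d : Fin n → ℂ) (i j : Fin n) :
    (U * diagonal d * star U) i j = ∑ k, U i k * d k * (starRingEnd ℂ) (U j k) := by
  simp [Matrix.mul_apply, Matrix.diagonal_apply, Matrix.star_apply, Finset.mul_sum]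

lemma gC_eq {a : ℝ} (τ : ℝ) :
    ((a:ℂ) + τ)⁻¹ - ((1:ℂ) + τ)⁻¹ = (((a+τ)⁻¹ - (1+τ)⁻¹ : ℝ) : ℂ) := by
  push_cast
  ring

lemma gC_integrable {a : ℝ} (ha : 0 < a)
    (hr : IntegrableOn (fun τ : ℝ => (a+τ)⁻¹ - (1+τ)⁻¹) (Set.Ioi 0)) :
    IntegrableOn (fun τ : ℝ => ((a:ℂ) + τ)⁻¹ - ((1:ℂ) + τ)⁻¹) (Set.Ioi 0) := by
  have := hr.ofReal (𝕜 := ℂ)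
  apply this.congr
  filter_upwards with τ
  exact (gC_eq τ).symm

lemma gC_integral {a : ℝ} (ha : 0 < a)
    (hint : IntegrableOn (fun τ : ℝ => (a+τ)⁻¹ - (1+τ)⁻¹) (Set.Ioi 0))
    (hr : ∫ τ in Set.Ioi (0:ℝ), ((a+τ)⁻¹ - (1+τ)⁻¹) = - Real.log a) :
    ∫ τ in Set.Ioi (0:ℝ), (((a:ℂ) + τ)⁻¹ - ((1:ℂ) + τ)⁻¹) = -((Real.log a : ℝ) : ℂ) := by
  have h1 : ∫ τ in Set.Ioi (0:ℝ), (((a:ℂ) + τ)⁻¹ - ((1:ℂ) + τ)⁻¹)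
      = ∫ τ in Set.Ioi (0:ℝ), ((((a+τ)⁻¹ - (1+τ)⁻¹ : ℝ)) : ℂ) := by
    congr 1
    funext τ
    exact gC_eq τ
  have h2 := ContinuousLinearMap.integral_comp_comm Complex.ofRealCLM hint
  simp only [Complex.ofRealCLM_apply] at h2
  rw [h1, h2, hr]
  push_cast
  ring

lemma mul_inv_add_smul {n : ℕ} {A : Matrix (Fin n) (Fin n) ℂ} (hA : A.PosDef) {τ : ℝ} (hτ : 0 < τ) :
    (A + (τ:ℂ) • (1 : Matrix (Fin n) (Fin n) ℂ)) * (A + (τ:ℂ) • (1 : Matrix (Fin n) (Fin n) ℂ))⁻¹ = 1 := by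
  set U := (hA.1.eigenvectorUnitary : Matrix (Fin n) (Fin n) ℂ) with hU
  have hUU : U * star U = 1 := Matrix.mem_unitaryGroup_iff.mp hA.1.eigenvectorUnitary.2
  have hUsU : star U * U = 1 := Matrix.mem_unitaryGroup_iff'.mp hA.1.eigenvectorUnitary.2
  have hne : ∀ k, (hA.1.eigenvalues k : ℂ) + τ ≠ 0 := by
    intro k
    have hk : 0 < hA.1.eigenvalues k + τ := by have := hA.eigenvalues_pos k; linarith
    intro h
    rw [show (hA.1.eigenvalues k : ℂ) + τ = ((hA.1.eigenvalues k + τ : ℝ) : ℂ) by push_cast; ring] at h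
    exact hk.ne' (by exact_mod_cast h)
  rw [inv_spectral hA hτ, spectral_add_smul hA τ]
  calc U * diagonal (fun k => (hA.1.eigenvalues k : ℂ) + τ) * star U *
        (U * diagonal (fun k => ((hA.1.eigenvalues k : ℂ) + τ)⁻¹) * star U)
      = U * (diagonal (fun k => (hA.1.eigenvalues k : ℂ) + τ) * (star U * U) *
          diagonal (fun k => ((hA.1.eigenvalues k : ℂ) + τ)⁻¹)) * star U := by
        simp only [Matrix.mul_assoc]
    _ = 1 := by
        rw [hUsU, mul_one, diagonal_mul_diagonal]
        rw [show (fun k => ((hA.1.eigenvalues k : ℂ) + τ) * ((hA.1.eigenvalues k : ℂ) + τ)⁻¹)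
            = fun _ => (1:ℂ) from funext fun k => mul_inv_cancel₀ (hne k)]
        rw [diagonal_one, mul_one, hUU]

/-- For Hermitian positive definite matrices `A` and `B`,
`log B - log A = ∫₀^∞ (A + τI)⁻¹ (B - A) (B + τI)⁻¹ dτ` (entrywise integral),
where `log` is the matrix logarithm defined via the spectral decomposition. -/
theorem log_sub_log_eq_integral {n : ℕ} (A B : Matrix (Fin n) (Fin n) ℂ)
    (hA : A.PosDef) (hB : B.PosDef) :
    hB.1.cfc Real.log - hA.1.cfc Real.log =
      Matrix.of (fun i j =>
        ∫ τ in Set.Ioi (0 : ℝ),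
          ((A + (τ : ℂ) • (1 : Matrix (Fin n) (Fin n) ℂ))⁻¹ * (B - A) *
            (B + (τ : ℂ) • (1 : Matrix (Fin n) (Fin n) ℂ))⁻¹) i j) := by
  set U := (hA.1.eigenvectorUnitary : Matrix (Fin n) (Fin n) ℂ) with hUdef
  set V := (hB.1.eigenvectorUnitary : Matrix (Fin n) (Fin n) ℂ) with hVdef
  set lam := hA.1.eigenvalues with hlam
  set mu := hB.1.eigenvalues with hmu
  have hlampos : ∀ k, 0 < lam k := hA.eigenvalues_pos
  have hmupos : ∀ k, 0 < mu k := hB.eigenvalues_pos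
  ext i j
  set c : Fin n → ℂ := fun k => U i k * (starRingEnd ℂ) (U j k) with hc
  set d : Fin n → ℂ := fun k => V i k * (starRingEnd ℂ) (V j k) with hd
  have hsum : ∑ k, c k = ∑ k, d k := by
    have hUU : U * star U = 1 := Matrix.mem_unitaryGroup_iff.mp hA.1.eigenvectorUnitary.2
    have hVV : V * star V = 1 := Matrix.mem_unitaryGroup_iff.mp hB.1.eigenvectorUnitary.2
    have h1 : ∑ k, c k = (U * star U) i j := by
      simp [Matrix.mul_apply, hc, Matrix.star_apply]
    have h2 : ∑ k, d k = (V * star V) i j := by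
      simp [Matrix.mul_apply, hd, Matrix.star_apply]
    rw [h1, h2, hUU, hVV]
  -- step 1: rewrite the integrand
  have hcongr : ∫ τ in Set.Ioi (0 : ℝ),
        ((A + (τ : ℂ) • (1 : Matrix (Fin n) (Fin n) ℂ))⁻¹ * (B - A) *
          (B + (τ : ℂ) • (1 : Matrix (Fin n) (Fin n) ℂ))⁻¹) i j
      = ∫ τ in Set.Ioi (0 : ℝ),
        (∑ k, c k * (((lam k : ℂ) + τ)⁻¹ - ((1:ℂ) + τ)⁻¹)
          - ∑ k, d k * (((mu k : ℂ) + τ)⁻¹ - ((1:ℂ) + τ)⁻¹)) := by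
    apply setIntegral_congr_fun measurableSet_Ioi
    intro τ hτ
    have hτ0 : (0:ℝ) < τ := hτ
    set M := A + (τ:ℂ) • (1 : Matrix (Fin n) (Fin n) ℂ) with hM
    set N := B + (τ:ℂ) • (1 : Matrix (Fin n) (Fin n) ℂ) with hN
    have hM1 : M * M⁻¹ = 1 := mul_inv_add_smul hA hτ0
    have hM2 : M⁻¹ * M = 1 := mul_eq_one_comm.mp hM1
    have hN1 : N * N⁻¹ = 1 := mul_inv_add_smul hB hτ0
    have hBA : B - A = N - M := by rw [hM, hN]; abel
    have key : M⁻¹ * (B - A) * N⁻¹ = M⁻¹ - N⁻¹ := by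
      rw [hBA, Matrix.mul_sub, Matrix.sub_mul, Matrix.mul_assoc, hN1, mul_one, hM2, Matrix.one_mul]
    show (M⁻¹ * (B - A) * N⁻¹) i j = _
    rw [key, Matrix.sub_apply]
    have hMinv : M⁻¹ i j = ∑ k, c k * ((lam k : ℂ) + τ)⁻¹ := by
      rw [hM, inv_spectral hA hτ0, conj_entry]
      exact Finset.sum_congr rfl fun k _ => by rw [hc]; ring
    have hNinv : N⁻¹ i j = ∑ k, d k * ((mu k : ℂ) + τ)⁻¹ := by
      rw [hN, inv_spectral hB hτ0, conj_entry]
      exact Finset.sum_congr rfl fun k _ => by rw [hd]; ring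
    rw [hMinv, hNinv]
    simp only [mul_sub, Finset.sum_sub_distrib, ← Finset.sum_mul]
    rw [hsum]
    ring
  -- step 2: compute the integral
  have hInt1 : ∀ (a : ℝ), 0 < a → IntegrableOn
      (fun τ : ℝ => ((a:ℂ) + τ)⁻¹ - ((1:ℂ) + τ)⁻¹) (Set.Ioi 0) :=
    fun a ha => gC_integrable ha (myIntegrable ha)
  have hVal : ∀ (a : ℝ), 0 < a →
      ∫ τ in Set.Ioi (0:ℝ), (((a:ℂ) + τ)⁻¹ - ((1:ℂ) + τ)⁻¹) = -((Real.log a : ℝ) : ℂ) :=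
    fun a ha => gC_integral ha (myIntegrable ha) (myIntegral ha)
  have hI1 : Integrable (fun τ : ℝ => ∑ k, c k * (((lam k : ℂ) + τ)⁻¹ - ((1:ℂ) + τ)⁻¹))
      (volume.restrict (Set.Ioi 0)) :=
    integrable_finset_sum _ fun k _ => ((hInt1 (lam k) (hlampos k)).const_mul (c k))
  have hI2 : Integrable (fun τ : ℝ => ∑ k, d k * (((mu k : ℂ) + τ)⁻¹ - ((1:ℂ) + τ)⁻¹))
      (volume.restrict (Set.Ioi 0)) :=
    integrable_finset_sum _ fun k _ => ((hInt1 (mu k) (hmupos k)).const_mul (d k))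
  rw [Matrix.sub_apply, Matrix.of_apply, hcongr, integral_sub hI1 hI2,
    integral_finset_sum _ (fun k _ => (hInt1 (lam k) (hlampos k)).const_mul (c k)),
    integral_finset_sum _ (fun k _ => (hInt1 (mu k) (hmupos k)).const_mul (d k))]
  have e1 : ∀ k, ∫ τ in Set.Ioi (0:ℝ), c k * (((lam k : ℂ) + τ)⁻¹ - ((1:ℂ) + τ)⁻¹)
      = c k * (-((Real.log (lam k) : ℝ) : ℂ)) := by
    intro k
    rw [MeasureTheory.integral_const_mul, hVal (lam k) (hlampos k)]
  have e2 : ∀ k, ∫ τ in Set.Ioi (0:ℝ), d k * (((mu k : ℂ) + τ)⁻¹ - ((1:ℂ) + τ)⁻¹)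
      = d k * (-((Real.log (mu k) : ℝ) : ℂ)) := by
    intro k
    rw [MeasureTheory.integral_const_mul, hVal (mu k) (hmupos k)]
  simp only [e1, e2]
  -- left side
  have hcfcA : hA.1.cfc Real.log i j = ∑ k, c k * ((Real.log (lam k) : ℝ) : ℂ) := by
    rw [Matrix.IsHermitian.cfc, Unitary.conjStarAlgAut_apply, conj_entry]
    exact Finset.sum_congr rfl fun k _ => by simp [hc, hUdef, Function.comp]; ring
  have hcfcB : hB.1.cfc Real.log i j = ∑ k, d k * ((Real.log (mu k) : ℝ) : ℂ) := by
    rw [Matrix.IsHermitian.cfc, Unitary.conjStarAlgAut_apply, conj_entry]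
    exact Finset.sum_congr rfl fun k _ => by simp [hd, hVdef, Function.comp]; ring
  rw [hcfcA, hcfcB]
  simp only [mul_neg]
  rw [Finset.sum_neg_distrib, Finset.sum_neg_distrib]
  ring
end

section
/- For square matrices A and B and t ∈ ℝ, e^{-tA} e^{t(A+B)} - I = ∫₀^t e^{-sA} B e^{s(A+B)} ds. -/
open MeasureTheory Matrix NormedSpace

attribute [local instance] Matrix.linftyOpNormedRing Matrix.linftyOpNormedAlgebra

/-- The continuous linear map sending a matrix to its `(i, j)` entry. -/
noncomputable def entryCLM {n : ℕ} (i j : Fin n) : Matrix (Fin n) (Fin n) ℂ →L[ℂ] ℂ :=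
  LinearMap.toContinuousLinearMap
    { toFun := fun X => X i j
      map_add' := fun _ _ => rfl
      map_smul' := fun _ _ => rfl }

/-- For square matrices `A` and `B` and `t : ℝ`,
`e^{-tA} e^{t(A+B)} - I = ∫₀^t e^{-sA} B e^{s(A+B)} ds` (entrywise integral). -/
theorem exp_neg_mul_exp_sub_one {n : ℕ} (A B : Matrix (Fin n) (Fin n) ℂ) (t : ℝ) :
    exp (-((t : ℂ) • A)) * exp ((t : ℂ) • (A + B)) - 1 =
      Matrix.of (fun i j =>
        ∫ s in (0 : ℝ)..t,
          (exp (-((s : ℂ) • A)) * B * exp ((s : ℂ) • (A + B))) i j) := by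
  -- derivative of the matrix-valued function
  have hexp1 : ∀ s : ℝ, HasDerivAt (fun u : ℝ => exp (-((u : ℂ) • A)))
      (exp (-((s : ℂ) • A)) * (-A)) s := by
    intro s
    have h := hasDerivAt_exp_smul_const (𝕂 := ℂ) (-A) (s : ℂ)
    have h2 := h.scomp s Complex.ofRealCLM.hasDerivAt
    simp only [Function.comp_def, Complex.ofRealCLM_apply, smul_neg, one_smul] at h2 ⊢
    simp at h2 ⊢
    convert h2 using 1 <;> rfl
  have hexp2 : ∀ s : ℝ, HasDerivAt (fun u : ℝ => exp ((u : ℂ) • (A + B)))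
      ((A + B) * exp ((s : ℂ) • (A + B))) s := by
    intro s
    have h := hasDerivAt_exp_smul_const' (𝕂 := ℂ) (A + B) (s : ℂ)
    have h2 := h.scomp s Complex.ofRealCLM.hasDerivAt
    simp only [Function.comp_def, Complex.ofRealCLM_apply, one_smul] at h2 ⊢
    simp at h2 ⊢
    convert h2 using 1 <;> rfl
  have key : ∀ s : ℝ, HasDerivAt
      (fun u : ℝ => exp (-((u : ℂ) • A)) * exp ((u : ℂ) • (A + B)))
      (exp (-((s : ℂ) • A)) * B * exp ((s : ℂ) • (A + B))) s := by
    intro s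
    have h := (hexp1 s).mul (hexp2 s)
    convert h using 1
    rotate_right
    rw [mul_assoc, mul_assoc, ← mul_add, ← add_mul, neg_add_cancel_left]
    all_goals rfl
  -- entrywise derivative
  have keyij : ∀ (i j : Fin n) (s : ℝ), HasDerivAt
      (fun u : ℝ => (exp (-((u : ℂ) • A)) * exp ((u : ℂ) • (A + B))) i j)
      ((exp (-((s : ℂ) • A)) * B * exp ((s : ℂ) • (A + B))) i j) s := by
    intro i j s
    exact ((entryCLM i j).restrictScalars ℝ).hasFDerivAt.comp_hasDerivAt s (key s)
  -- continuity of the integrand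
  have hcont : ∀ i j : Fin n, Continuous
      (fun s : ℝ => (exp (-((s : ℂ) • A)) * B * exp ((s : ℂ) • (A + B))) i j) := by
    intro i j
    have h1 : Continuous fun s : ℝ => exp (-((s : ℂ) • A)) :=
      exp_continuous.comp ((Complex.continuous_ofReal.smul continuous_const).neg)
    have h2 : Continuous fun s : ℝ => exp ((s : ℂ) • (A + B)) :=
      exp_continuous.comp (Complex.continuous_ofReal.smul continuous_const)
    exact (entryCLM i j).continuous.comp
      ((h1.mul (continuous_const : Continuous fun _ : ℝ => B)).mul h2)
  -- FTC entrywise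
  ext i j
  simp only [Matrix.sub_apply, Matrix.of_apply]
  have hFTC := intervalIntegral.integral_eq_sub_of_hasDerivAt
    (f := fun u : ℝ => (exp (-((u : ℂ) • A)) * exp ((u : ℂ) • (A + B))) i j)
    (fun s _ => keyij i j s) ((hcont i j).intervalIntegrable 0 t)
  rw [hFTC]
  congr 1
  simp [Matrix.one_apply]
end

section
/- For a Hermitian positive definite matrix A and any Hermitian matrix Δ, the operators M_A : Δ ↦ ∫₀¹ A^{1-τ} Δ A^{τ} dτ and N_A : Δ ↦ ∫₀^∞ (A+τI)⁻¹ Δ (A+τI)⁻¹ dτ are mutually inverse: M_A(N_A(Δ)) = Δ. -/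
open MeasureTheory Matrix
open scoped ComplexOrder

section ScrambledAux
open Real Set Filter Topology

lemma deriv_aux (a b : ℝ) (ha : 0 < a) (hb : 0 < b) (hab : a ≠ b) (x : ℝ) (hx : 0 ≤ x) :
    HasDerivAt (fun τ => (b - a)⁻¹ * (Real.log (a + τ) - Real.log (b + τ)))
      ((a + x)⁻¹ * (b + x)⁻¹) x := by
  have h1 : HasDerivAt (fun τ : ℝ => Real.log (a + τ)) (a + x)⁻¹ x := by
    have := (Real.hasDerivAt_log (by positivity : a + x ≠ 0)).comp x
      ((hasDerivAt_id x).const_add a)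
    simpa [Function.comp_def] using this
  have h2 : HasDerivAt (fun τ : ℝ => Real.log (b + τ)) (b + x)⁻¹ x := by
    have := (Real.hasDerivAt_log (by positivity : b + x ≠ 0)).comp x
      ((hasDerivAt_id x).const_add b)
    simpa [Function.comp_def] using this
  have h := ((h1.sub h2).const_mul ((b - a)⁻¹))
  convert h using 1
  have hax : (0:ℝ) < a + x := by positivity
  have hbx : (0:ℝ) < b + x := by positivity
  have hba : b - a ≠ 0 := sub_ne_zero.mpr (Ne.symm hab)
  · rfl
  · rfl
  · rfl
  field_simp
  ring

lemma tendsto_aux (a b : ℝ) : Tendsto (fun τ => Real.log (a + τ) - Real.log (b + τ)) atTop (𝓝 0) := by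
  have h1 : Tendsto (fun τ : ℝ => (a + τ) / (b + τ)) atTop (𝓝 1) := by
    have : Tendsto (fun τ : ℝ => 1 + (a - b) / (b + τ)) atTop (𝓝 1) := by
      have hb : Tendsto (fun τ : ℝ => b + τ) atTop atTop :=
        tendsto_atTop_add_const_left _ b tendsto_id
      simpa using tendsto_const_nhds.add ((tendsto_const_nhds (x := a - b)).div_atTop hb)
    refine this.congr' ?_
    filter_upwards [eventually_gt_atTop (max 0 (-b))] with τ hτ
    have hbτ : b + τ ≠ 0 := by
      have : -b < τ := lt_of_le_of_lt (le_max_right _ _) hτ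
      intro h; linarith
    field_simp
    ring
  have h2 : Tendsto (fun τ : ℝ => Real.log ((a + τ) / (b + τ))) atTop (𝓝 0) := by
    have := (Real.continuousAt_log one_ne_zero).tendsto.comp h1
    simpa [Function.comp_def] using this
  refine h2.congr' ?_
  filter_upwards [eventually_gt_atTop (max (-a) (-b))] with τ hτ
  have haτ : (0:ℝ) < a + τ := by have : -a < τ := lt_of_le_of_lt (le_max_left _ _) hτ; linarith
  have hbτ : (0:ℝ) < b + τ := by have : -b < τ := lt_of_le_of_lt (le_max_right _ _) hτ; linarith
  rw [Real.log_div haτ.ne' hbτ.ne']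

lemma integrable_Ioi (a b : ℝ) (ha : 0 < a) (hb : 0 < b) :
    IntegrableOn (fun τ => (a + τ)⁻¹ * (b + τ)⁻¹) (Set.Ioi (0:ℝ)) := by
  rcases eq_or_ne a b with rfl | hab
  · refine integrableOn_Ioi_deriv_of_nonneg ?_ (fun x hx => ?_) (fun x hx => ?_) ?_
      (g := fun τ => -(a + τ)⁻¹) (l := 0)
    · exact (((continuous_const.add continuous_id).continuousAt.inv₀
        (by positivity : a + (0:ℝ) ≠ 0)).neg).continuousWithinAt
    · have hax : (0:ℝ) < a + x := by have := hx.out; positivity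
      have : HasDerivAt (fun τ : ℝ => (a + τ)⁻¹) (-1 / (a + x)^2) x := by
        have := ((hasDerivAt_id x).const_add a).inv hax.ne'
        simpa [Function.comp_def, Pi.inv_def] using this
      have h := this.neg
      convert h using 1
      · rfl
      · rfl
      · rfl
      field_simp
    · have : (0:ℝ) < a + x := by have := hx.out; positivity
      positivity
    · have hb' : Tendsto (fun τ : ℝ => a + τ) atTop atTop :=
        tendsto_atTop_add_const_left _ a tendsto_id
      simpa using (hb'.inv_tendsto_atTop).neg
  · refine integrableOn_Ioi_deriv_of_nonneg ?_ (fun x hx => deriv_aux a b ha hb hab x hx.out.le)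
      (fun x hx => ?_) ((tendsto_aux a b).const_mul _)
      (g := fun τ => (b - a)⁻¹ * (Real.log (a + τ) - Real.log (b + τ)))
    · refine ContinuousAt.continuousWithinAt ?_
      have c1 : ContinuousAt (fun τ : ℝ => Real.log (a + τ)) 0 :=
        (Real.continuousAt_log (by positivity)).comp ((continuous_const.add continuous_id).continuousAt)
      have c2 : ContinuousAt (fun τ : ℝ => Real.log (b + τ)) 0 :=
        (Real.continuousAt_log (by positivity)).comp ((continuous_const.add continuous_id).continuousAt)
      exact (c1.sub c2).const_mul _
    · have h1 : (0:ℝ) < a + x := by have := hx.out; positivity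
      have h2 : (0:ℝ) < b + x := by have := hx.out; positivity
      positivity

lemma integ_Ioi (a b : ℝ) (ha : 0 < a) (hb : 0 < b) :
    ∫ τ in Set.Ioi (0:ℝ), (a + τ)⁻¹ * (b + τ)⁻¹ =
      if a = b then a⁻¹ else (Real.log a - Real.log b) / (a - b) := by
  rcases eq_or_ne a b with rfl | hab
  · simp only [if_pos rfl]
    have := integral_Ioi_of_hasDerivAt_of_tendsto
      (f := fun τ => -(a + τ)⁻¹) (f' := fun τ => (a + τ)⁻¹ * (a + τ)⁻¹) (a := 0) (m := 0)
      ?_ ?_ (integrable_Ioi a a ha ha) ?_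
    · rw [this]; simp
    · exact (((continuous_const.add continuous_id).continuousAt.inv₀
        (by positivity : a + (0:ℝ) ≠ 0)).neg).continuousWithinAt
    · intro x hx
      have hax : (0:ℝ) < a + x := by have := hx.out; positivity
      have : HasDerivAt (fun τ : ℝ => (a + τ)⁻¹) (-1 / (a + x)^2) x := by
        have := ((hasDerivAt_id x).const_add a).inv hax.ne'
        simpa [Function.comp_def, Pi.inv_def] using this
      have h := this.neg
      convert h using 1
      · rfl
      field_simp
    · have hb' : Tendsto (fun τ : ℝ => a + τ) atTop atTop :=
        tendsto_atTop_add_const_left _ a tendsto_id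
      simpa using (hb'.inv_tendsto_atTop).neg
  · simp only [if_neg hab]
    have := integral_Ioi_of_hasDerivAt_of_tendsto
      (f := fun τ => (b - a)⁻¹ * (Real.log (a + τ) - Real.log (b + τ)))
      (f' := fun τ => (a + τ)⁻¹ * (b + τ)⁻¹) (a := 0) (m := 0)
      ?_ (fun x hx => deriv_aux a b ha hb hab x hx.out.le) (integrable_Ioi a b ha hb)
      (by simpa using (tendsto_aux a b).const_mul ((b - a)⁻¹))
    · rw [this]
      have hba : b - a ≠ 0 := sub_ne_zero.mpr (Ne.symm hab)
      have hab' : a - b ≠ 0 := sub_ne_zero.mpr hab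
      field_simp
      ring
    · refine ContinuousAt.continuousWithinAt ?_
      have c1 : ContinuousAt (fun τ : ℝ => Real.log (a + τ)) 0 :=
        (Real.continuousAt_log (by positivity)).comp ((continuous_const.add continuous_id).continuousAt)
      have c2 : ContinuousAt (fun τ : ℝ => Real.log (b + τ)) 0 :=
        (Real.continuousAt_log (by positivity)).comp ((continuous_const.add continuous_id).continuousAt)
      exact (c1.sub c2).const_mul _

lemma integ_unit (a b : ℝ) (ha : 0 < a) (hb : 0 < b) :
    ∫ τ in (0:ℝ)..1, a ^ (1 - τ) * b ^ τ =
      if a = b then a else (a - b) / (Real.log a - Real.log b) := by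
  rcases eq_or_ne a b with rfl | hab
  · simp only [if_pos rfl]
    have : ∀ τ : ℝ, a ^ (1 - τ) * a ^ τ = a := by
      intro τ
      rw [← Real.rpow_add ha]
      norm_num
    simp only [this]
    simp
  · simp only [if_neg hab]
    have hlog : Real.log a ≠ Real.log b := fun h =>
      hab (Real.log_injOn_pos (Set.mem_Ioi.mpr ha) (Set.mem_Ioi.mpr hb) h)
    have hL : Real.log b - Real.log a ≠ 0 := sub_ne_zero.mpr (Ne.symm hlog)
    have hD : ∀ t ∈ Set.uIcc (0:ℝ) 1, HasDerivAt
        (fun τ => a ^ (1 - τ) * b ^ τ / (Real.log b - Real.log a))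
        (a ^ (1 - t) * b ^ t) t := by
      intro t _
      have h1 : HasDerivAt (fun τ : ℝ => a ^ (1 - τ)) (a ^ (1 - t) * Real.log a * (-1)) t := by
        have houter := (Real.hasStrictDerivAt_const_rpow ha (1 - t)).hasDerivAt
        have hinner : HasDerivAt (fun τ : ℝ => 1 - τ) (-1) t := by
          simpa using (hasDerivAt_id t).const_sub 1
        simpa [Function.comp_def] using houter.comp t hinner
      have h2 : HasDerivAt (fun τ : ℝ => b ^ τ) (b ^ t * Real.log b) t :=
        (Real.hasStrictDerivAt_const_rpow hb t).hasDerivAt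
      have h := (h1.mul h2).div_const (Real.log b - Real.log a)
      convert h using 1
      · rfl
      · rfl
      · rfl
      field_simp
      ring
    have ccr : ∀ c : ℝ, 0 < c → Continuous (fun x : ℝ => c ^ x) := by
      intro c hc
      have : (fun x : ℝ => c ^ x) = fun x => Real.exp (Real.log c * x) :=
        funext fun x => Real.rpow_def_of_pos hc x
      rw [this]
      exact Real.continuous_exp.comp (continuous_const.mul continuous_id)
    have hcont : Continuous (fun τ : ℝ => a ^ (1 - τ) * b ^ τ) :=
      ((ccr a ha).comp (continuous_const.sub continuous_id)).mul (ccr b hb)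
    rw [intervalIntegral.integral_eq_sub_of_hasDerivAt hD (hcont.intervalIntegrable 0 1)]
    simp only [sub_self, sub_zero, Real.rpow_zero, Real.rpow_one, one_mul, mul_one]
    rw [div_sub_div_same, div_eq_div_iff hL (sub_ne_zero.mpr hlog)]
    ring

lemma key_mul (a b : ℝ) (ha : 0 < a) (hb : 0 < b) :
    (∫ τ in (0:ℝ)..1, a ^ (1 - τ) * b ^ τ) *
      (∫ τ in Set.Ioi (0:ℝ), (a + τ)⁻¹ * (b + τ)⁻¹) = 1 := by
  rw [integ_Ioi a b ha hb, integ_unit a b ha hb]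
  rcases eq_or_ne a b with rfl | hab
  · simp [ha.ne']
  · simp only [if_neg hab]
    have hlog : Real.log a ≠ Real.log b := fun h =>
      hab (Real.log_injOn_pos (Set.mem_Ioi.mpr ha) (Set.mem_Ioi.mpr hb) h)
    have h1 : Real.log a - Real.log b ≠ 0 := sub_ne_zero.mpr hlog
    have h2 : a - b ≠ 0 := sub_ne_zero.mpr hab
    field_simp


lemma matrix_integral_conj {m : Type*} [Fintype m] [DecidableEq m] (μ : Measure ℝ)
    (P Q : Matrix m m ℂ) (G : ℝ → Matrix m m ℂ)
    (hG : ∀ k l, Integrable (fun τ => G τ k l) μ) :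
    (Matrix.of fun i j => ∫ τ, (P * G τ * Q) i j ∂μ) =
      P * (Matrix.of fun k l => ∫ τ, G τ k l ∂μ) * Q := by
  ext i j
  have hexp : ∀ τ, (P * G τ * Q) i j = ∑ l, ∑ k, P i k * G τ k l * Q l j := by
    intro τ
    simp [Matrix.mul_apply, Finset.sum_mul]
  simp only [Matrix.of_apply, hexp]
  rw [integral_finset_sum _ (fun l _ => integrable_finset_sum _
    (fun k _ => ((hG k l).const_mul _).mul_const _))]
  have : ∀ l, ∫ τ, ∑ k, P i k * G τ k l * Q l j ∂μ
      = ∑ k, P i k * (∫ τ, G τ k l ∂μ) * Q l j := by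
    intro l
    rw [integral_finset_sum _ (fun k _ => ((hG k l).const_mul _).mul_const _)]
    refine Finset.sum_congr rfl fun k _ => ?_
    rw [MeasureTheory.integral_mul_const, MeasureTheory.integral_const_mul]
  simp only [this]
  simp [Matrix.mul_apply, Finset.sum_mul]

lemma cont_const_rpow {c : ℝ} (hc : 0 < c) : Continuous (fun x : ℝ => c ^ x) := by
  have : (fun x : ℝ => c ^ x) = fun x => Real.exp (Real.log c * x) :=
    funext fun x => Real.rpow_def_of_pos hc x
  rw [this]
  exact Real.continuous_exp.comp (continuous_const.mul continuous_id)


end ScrambledAux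

/-- For a Hermitian positive definite matrix `A` and any Hermitian matrix `Δ`,
the operators `M_A : Δ ↦ ∫₀¹ A^{1-τ} Δ A^{τ} dτ` and
`N_A : Δ ↦ ∫₀^∞ (A+τI)⁻¹ Δ (A+τI)⁻¹ dτ` are mutually inverse: `M_A (N_A Δ) = Δ`. -/
theorem scrambled_mul_inverse {n : ℕ} (A : Matrix (Fin n) (Fin n) ℂ) (hA : A.PosDef)
    (Δ : Matrix (Fin n) (Fin n) ℂ) (hΔ : Δ.IsHermitian) :
    (fun X : Matrix (Fin n) (Fin n) ℂ =>
        Matrix.of (fun i j =>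
          ∫ τ in (0 : ℝ)..1,
            (hA.1.cfc (fun x => x ^ ((1 : ℝ) - τ)) * X *
              hA.1.cfc (fun x => x ^ τ)) i j))
      (Matrix.of (fun i j =>
        ∫ τ in Set.Ioi (0 : ℝ),
          ((A + (τ : ℂ) • (1 : Matrix (Fin n) (Fin n) ℂ))⁻¹ * Δ *
            (A + (τ : ℂ) • (1 : Matrix (Fin n) (Fin n) ℂ))⁻¹) i j)) = Δ := by
  set U : Matrix (Fin n) (Fin n) ℂ := (hA.1.eigenvectorUnitary : Matrix (Fin n) (Fin n) ℂ)
    with hUdef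
  set lam : Fin n → ℝ := hA.1.eigenvalues with hlamdef
  have hlam : ∀ i, 0 < lam i := fun i => hA.eigenvalues_pos i
  have hU1 : U * star U = 1 := (Matrix.mem_unitaryGroup_iff).mp (hA.1.eigenvectorUnitary).2
  have hU2 : star U * U = 1 := (Matrix.mem_unitaryGroup_iff').mp (hA.1.eigenvectorUnitary).2
  have hconj : ∀ X Y : Matrix (Fin n) (Fin n) ℂ,
      (U * X * star U) * (U * Y * star U) = U * (X * Y) * star U := by
    intro X Y
    simp only [Matrix.mul_assoc]
    rw [← Matrix.mul_assoc (star U) U (Y * star U), hU2, Matrix.one_mul]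
  set Δh : Matrix (Fin n) (Fin n) ℂ := star U * Δ * U with hΔhdef
  have hΔrep : U * Δh * star U = Δ := by
    rw [hΔhdef]
    simp only [Matrix.mul_assoc]
    rw [hU1, Matrix.mul_one, ← Matrix.mul_assoc U (star U) Δ, hU1, Matrix.one_mul]
  -- the representation of the resolvent
  have hrep : ∀ τ : ℝ, 0 < τ →
      (A + (τ:ℂ) • 1)⁻¹ * Δ * (A + (τ:ℂ) • 1)⁻¹ =
      U * (Matrix.of fun k l =>
        ((((lam k + τ)⁻¹ * (lam l + τ)⁻¹ : ℝ)) : ℂ) * Δh k l) * star U := by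
    intro τ hτ
    have hpos : ∀ i, (0:ℝ) < lam i + τ := fun i => add_pos (hlam i) hτ
    have hAd : A + (τ:ℂ) • 1 = U * diagonal (fun i => ((lam i + τ : ℝ) : ℂ)) * star U := by
      have h1 : (τ:ℂ) • (1 : Matrix (Fin n) (Fin n) ℂ) = U * ((τ:ℂ) • 1) * star U := by
        rw [Matrix.mul_smul, Matrix.mul_one, Matrix.smul_mul, hU1]
      have h2 : diagonal (RCLike.ofReal ∘ lam) + (τ:ℂ) • (1 : Matrix (Fin n) (Fin n) ℂ)
          = diagonal (fun i => ((lam i + τ : ℝ) : ℂ)) := by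
        rw [← Matrix.diagonal_one, ← Matrix.diagonal_smul, Matrix.diagonal_add]
        congr 1
        funext i
        simp [RCLike.ofReal]
      conv_lhs => rw [hA.1.spectral_theorem, Unitary.conjStarAlgAut_apply, h1]
      rw [← Matrix.add_mul, ← Matrix.mul_add, h2]
    have hdiaginv : diagonal (fun i => ((lam i + τ : ℝ) : ℂ)) *
        diagonal (fun i => (((lam i + τ : ℝ) : ℂ))⁻¹) = 1 := by
      rw [Matrix.diagonal_mul_diagonal]
      have : (fun i => ((lam i + τ : ℝ) : ℂ) * (((lam i + τ : ℝ) : ℂ))⁻¹) = fun _ => 1 := by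
        funext i
        exact mul_inv_cancel₀ (by exact_mod_cast (hpos i).ne')
      rw [this, Matrix.diagonal_one]
    have hInv : (A + (τ:ℂ) • 1)⁻¹ =
        U * diagonal (fun i => (((lam i + τ : ℝ) : ℂ))⁻¹) * star U := by
      apply Matrix.inv_eq_right_inv
      rw [hAd, hconj, hdiaginv, Matrix.mul_one, hU1]
    rw [hInv, ← hΔrep, hconj, hconj]
    congr 1
    congr 1
    ext k l
    simp [Matrix.mul_apply, Matrix.diagonal, Finset.sum_ite_eq, Finset.sum_ite_eq']
    push_cast
    ring
  have hN : (Matrix.of fun i j =>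
      ∫ τ in Set.Ioi (0:ℝ), ((A + (τ:ℂ) • 1)⁻¹ * Δ * (A + (τ:ℂ) • 1)⁻¹) i j)
      = U * (Matrix.of fun k l =>
          ((∫ τ in Set.Ioi (0:ℝ), (lam k + τ)⁻¹ * (lam l + τ)⁻¹ : ℝ) : ℂ) * Δh k l) * star U := by
    have step1 : ∀ i j : Fin n,
        (∫ τ in Set.Ioi (0:ℝ), ((A + (τ:ℂ) • 1)⁻¹ * Δ * (A + (τ:ℂ) • 1)⁻¹) i j)
        = ∫ τ in Set.Ioi (0:ℝ), (U * (Matrix.of fun k l =>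
            ((((lam k + τ)⁻¹ * (lam l + τ)⁻¹ : ℝ)) : ℂ) * Δh k l) * star U) i j := fun i j =>
      setIntegral_congr_fun measurableSet_Ioi (fun τ hτ => by rw [hrep τ hτ])
    have hGint : ∀ k l : Fin n, Integrable (fun τ => (Matrix.of fun k l =>
        ((((lam k + τ)⁻¹ * (lam l + τ)⁻¹ : ℝ)) : ℂ) * Δh k l) k l)
        (volume.restrict (Set.Ioi 0)) := by
      intro k l
      simpa using ((integrable_Ioi (lam k) (lam l) (hlam k) (hlam l)).ofReal).mul_const (Δh k l)
    have hmc := matrix_integral_conj (volume.restrict (Set.Ioi 0)) U (star U)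
      (fun τ => Matrix.of fun k l => ((((lam k + τ)⁻¹ * (lam l + τ)⁻¹ : ℝ)) : ℂ) * Δh k l) hGint
    simp only [step1]
    rw [hmc]
    congr 1
    congr 1
    ext k l
    simp only [Matrix.of_apply]
    rw [MeasureTheory.integral_mul_const]
    congr 1
    exact integral_ofReal
  beta_reduce
  rw [hN]
  have hcfc : ∀ f : ℝ → ℝ, hA.1.cfc f = U * diagonal (RCLike.ofReal ∘ f ∘ lam) * star U :=
    fun f => rfl
  set C : Matrix (Fin n) (Fin n) ℂ := Matrix.of fun k l =>
    ((∫ τ in Set.Ioi (0:ℝ), (lam k + τ)⁻¹ * (lam l + τ)⁻¹ : ℝ) : ℂ) * Δh k l with hCdef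
  have step2 : ∀ i j : Fin n,
      (∫ τ in (0:ℝ)..1, (hA.1.cfc (fun x => x ^ ((1:ℝ) - τ)) * (U * C * star U) *
          hA.1.cfc (fun x => x ^ τ)) i j)
      = ∫ τ in (0:ℝ)..1, (U * (Matrix.of fun k l =>
          (((lam k ^ (1 - τ) * lam l ^ τ : ℝ)) : ℂ) * C k l) * star U) i j := by
    intro i j
    refine intervalIntegral.integral_congr fun τ _ => ?_
    rw [hcfc, hcfc, hconj, hconj]
    have hmid : Matrix.diagonal (RCLike.ofReal ∘ (fun x : ℝ => x ^ ((1:ℝ) - τ)) ∘ lam) * C *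
        Matrix.diagonal (RCLike.ofReal ∘ (fun x : ℝ => x ^ τ) ∘ lam)
        = Matrix.of fun k l => (((lam k ^ (1 - τ) * lam l ^ τ : ℝ)) : ℂ) * C k l := by
      ext k l
      simp [Matrix.mul_apply, Matrix.diagonal, Finset.sum_ite_eq, Finset.sum_ite_eq',
        Function.comp, RCLike.ofReal]
      push_cast
      ring
    rw [hmid]
  simp only [step2]
  simp only [intervalIntegral.integral_of_le zero_le_one]
  have hGint2 : ∀ k l : Fin n, Integrable (fun τ : ℝ => (Matrix.of fun k l =>
      (((lam k ^ (1 - τ) * lam l ^ τ : ℝ)) : ℂ) * C k l) k l)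
      (volume.restrict (Set.Ioc 0 1)) := by
    intro k l
    have hc : Continuous (fun τ : ℝ => (((lam k ^ (1 - τ) * lam l ^ τ : ℝ)) : ℂ) * C k l) := by
      refine (Complex.continuous_ofReal.comp ?_).mul continuous_const
      exact ((cont_const_rpow (hlam k)).comp (continuous_const.sub continuous_id)).mul
        (cont_const_rpow (hlam l))
    have h2 : IntegrableOn (fun τ : ℝ => (((lam k ^ (1 - τ) * lam l ^ τ : ℝ)) : ℂ) * C k l)
        (Set.Ioc 0 1) volume := hc.integrableOn_Ioc
    simpa only [Matrix.of_apply] using h2.integrable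
  have hmc2 := matrix_integral_conj (volume.restrict (Set.Ioc 0 1)) U (star U)
    (fun τ : ℝ => Matrix.of fun k l => (((lam k ^ (1 - τ) * lam l ^ τ : ℝ)) : ℂ) * C k l) hGint2
  rw [hmc2]
  have hCfinal : (Matrix.of fun k l =>
      ∫ τ in Set.Ioc (0:ℝ) 1, (((lam k ^ (1 - τ) * lam l ^ τ : ℝ)) : ℂ) * C k l) = Δh := by
    ext k l
    simp only [Matrix.of_apply]
    rw [MeasureTheory.integral_mul_const, hCdef]
    simp only [Matrix.of_apply]
    have h1 : (∫ τ in Set.Ioc (0:ℝ) 1, (((lam k ^ (1 - τ) * lam l ^ τ : ℝ)) : ℂ))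
        = (((∫ τ in Set.Ioc (0:ℝ) 1, lam k ^ (1 - τ) * lam l ^ τ) : ℝ) : ℂ) := integral_ofReal
    rw [h1, ← mul_assoc, ← Complex.ofReal_mul,
      ← intervalIntegral.integral_of_le (zero_le_one (α := ℝ)),
      key_mul (lam k) (lam l) (hlam k) (hlam l), Complex.ofReal_one, one_mul]
  simp only [Matrix.of_apply]
  rw [hCfinal, hΔrep]
end

section
/- For a Hermitian positive definite matrix ρ and any Hermitian matrix δ, trace(ρ · ∫₀^∞ (ρ+tI)⁻¹ δ (ρ+tI)⁻¹ dt) = trace(δ). -/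
open MeasureTheory Matrix Filter
open scoped ComplexOrder

lemma aux_hasDeriv {a : ℝ} (ha : 0 < a) (x : ℝ) (hx : x ∈ Set.Ici (0:ℝ)) :
    HasDerivAt (fun t : ℝ => -(a + t)⁻¹) (((a + x)*(a + x))⁻¹) x := by
  have h1 : HasDerivAt (fun t : ℝ => a + t) 1 x := (hasDerivAt_id x).const_add a
  have hx0 : (0:ℝ) ≤ x := hx
  have hne : a + x ≠ 0 := by positivity
  have := (h1.inv hne).neg
  refine this.congr_deriv ?_
  ring

lemma aux_tendsto {a : ℝ} : Tendsto (fun t : ℝ => -(a + t)⁻¹) atTop (nhds 0) := by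
  rw [show (0:ℝ) = -0 by ring]
  exact (tendsto_inv_atTop_zero.comp (tendsto_atTop_add_const_left _ a tendsto_id)).neg

lemma aux_integrable {a : ℝ} (ha : 0 < a) :
    IntegrableOn (fun t : ℝ => ((a + t)*(a + t))⁻¹) (Set.Ioi (0:ℝ)) := by
  refine integrableOn_Ioi_deriv_of_nonneg' (aux_hasDeriv ha) (fun x hx => ?_) aux_tendsto
  have : (0:ℝ) < a + x := by have := hx.out; positivity
  positivity

lemma aux_integral {a : ℝ} (ha : 0 < a) :
    ∫ t in Set.Ioi (0:ℝ), ((a + t)*(a + t))⁻¹ = a⁻¹ := by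
  rw [integral_Ioi_of_hasDerivAt_of_nonneg' (aux_hasDeriv ha) (fun x hx => ?_) aux_tendsto]
  · simp
  · have : (0:ℝ) < a + x := by have := hx.out; positivity
    positivity

/-- For a Hermitian positive definite matrix `ρ` and any Hermitian matrix `δ`,
`trace (ρ · ∫₀^∞ (ρ+tI)⁻¹ δ (ρ+tI)⁻¹ dt) = trace δ`. -/
theorem trace_rho_scrambled_inv {n : ℕ} (ρ δ : Matrix (Fin n) (Fin n) ℂ)
    (hρ : ρ.PosDef) (hδ : δ.IsHermitian) :
    (ρ * Matrix.of (fun i j =>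
      ∫ t in Set.Ioi (0 : ℝ),
        ((ρ + (t : ℂ) • (1 : Matrix (Fin n) (Fin n) ℂ))⁻¹ * δ *
          (ρ + (t : ℂ) • (1 : Matrix (Fin n) (Fin n) ℂ))⁻¹) i j)).trace = δ.trace := by
  classical
  have hH := hρ.1
  set U : Matrix (Fin n) (Fin n) ℂ := (hH.eigenvectorUnitary : Matrix (Fin n) (Fin n) ℂ) with hUdef
  set lam : Fin n → ℝ := hH.eigenvalues with hlamdef
  have hlam : ∀ p, 0 < lam p := fun p => hρ.eigenvalues_pos p
  have hUmem := (hH.eigenvectorUnitary).2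
  rw [Unitary.mem_iff] at hUmem
  have hUsU : star U * U = 1 := hUmem.1
  have hUU : U * star U = 1 := hUmem.2
  have hspec : ρ = U * diagonal (fun p => (lam p : ℂ)) * star U := by
    simpa [Function.comp_def] using hH.spectral_theorem
  set δ' : Matrix (Fin n) (Fin n) ℂ := star U * δ * U with hδ'def
  set c : Fin n → ℝ → ℂ := fun p t => ((lam p : ℂ) + t)⁻¹ with hcdef
  -- inverse formula
  have hA : ∀ t : ℝ, ρ + (t : ℂ) • 1 =
      U * diagonal (fun p => (lam p : ℂ) + t) * star U := by
    intro t
    have h1 : diagonal (fun p => (lam p : ℂ) + (t:ℂ)) =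
        diagonal (fun p => (lam p : ℂ)) + (t:ℂ) • 1 := by
      ext p q
      by_cases h : p = q <;>
        simp [Matrix.diagonal_apply, Matrix.one_apply, h]
    rw [h1, Matrix.mul_add, Matrix.add_mul, ← hspec]
    congr 1
    rw [Matrix.mul_smul, Matrix.smul_mul, Matrix.mul_one, hUU]
  have hne : ∀ (p : Fin n) (t : ℝ), t ∈ Set.Ioi (0:ℝ) → ((lam p : ℂ) + t) ≠ 0 := by
    intro p t ht
    have : (0:ℝ) < lam p + t := by have := ht.out; have := hlam p; linarith
    rw [show ((lam p : ℂ) + t) = ((lam p + t : ℝ) : ℂ) by push_cast; ring]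
    exact_mod_cast this.ne'
  have hinv : ∀ t ∈ Set.Ioi (0:ℝ), (ρ + (t : ℂ) • 1)⁻¹ =
      U * diagonal (fun p => c p t) * star U := by
    intro t ht
    apply Matrix.inv_eq_right_inv
    rw [hA t]
    calc U * diagonal (fun p => (lam p : ℂ) + t) * star U *
          (U * diagonal (fun p => c p t) * star U)
        = U * (diagonal (fun p => (lam p : ℂ) + t) * (star U * U) *
            diagonal (fun p => c p t)) * star U := by
          simp only [Matrix.mul_assoc]
      _ = U * (diagonal (fun p => (lam p : ℂ) + t) * diagonal (fun p => c p t)) * star U := by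
          rw [hUsU, Matrix.mul_one]
      _ = 1 := by
          rw [Matrix.diagonal_mul_diagonal]
          have : (fun p => ((lam p : ℂ) + t) * c p t) = fun _ => 1 := by
            funext p
            exact mul_inv_cancel₀ (hne p t ht)
          rw [this, Matrix.diagonal_one, Matrix.mul_one, hUU]
  -- integrability
  have hIntR : ∀ p q : Fin n,
      IntegrableOn (fun t : ℝ => (lam p + t)⁻¹ * (lam q + t)⁻¹) (Set.Ioi (0:ℝ)) := by
    intro p q
    set m : ℝ := min (lam p) (lam q) with hm
    have hm0 : 0 < m := lt_min (hlam p) (hlam q)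
    apply Integrable.mono' (aux_integrable hm0)
    · apply ContinuousOn.aestronglyMeasurable _ measurableSet_Ioi
      apply ContinuousOn.mul
      · apply ContinuousOn.inv₀ (by fun_prop)
        intro t ht
        have := ht.out; have := hlam p; positivity
      · apply ContinuousOn.inv₀ (by fun_prop)
        intro t ht
        have := ht.out; have := hlam q; positivity
    · rw [ae_restrict_iff' measurableSet_Ioi]
      apply ae_of_all
      intro t ht
      have ht0 : (0:ℝ) < t := ht.out
      have hp0 : (0:ℝ) < lam p + t := by have := hlam p; linarith
      have hq0 : (0:ℝ) < lam q + t := by have := hlam q; linarith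
      have hmp : m + t ≤ lam p + t := by have := min_le_left (lam p) (lam q); linarith
      have hmq : m + t ≤ lam q + t := by have := min_le_right (lam p) (lam q); linarith
      have hmt : (0:ℝ) < m + t := by linarith
      rw [Real.norm_eq_abs, abs_of_nonneg (by positivity), ← mul_inv]
      exact inv_anti₀ (by positivity) (mul_le_mul hmp hmq hmt.le hp0.le)
  have hccEq : ∀ p q : Fin n, ∀ t : ℝ,
      c p t * c q t = (((lam p + t)⁻¹ * (lam q + t)⁻¹ : ℝ) : ℂ) := by
    intro p q t
    simp [hcdef]
  have hInt : ∀ p q : Fin n,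
      IntegrableOn (fun t : ℝ => c p t * c q t) (Set.Ioi (0:ℝ)) := by
    intro p q
    have := (hIntR p q).ofReal (𝕜 := ℂ)
    exact this.congr (ae_of_all _ fun t => (hccEq p q t).symm)
  -- the matrix of integrals
  set E : Matrix (Fin n) (Fin n) ℂ :=
    Matrix.of (fun p q => δ' p q * ∫ t in Set.Ioi (0:ℝ), c p t * c q t) with hEdef
  have hM : (Matrix.of (fun i j =>
      ∫ t in Set.Ioi (0 : ℝ),
        ((ρ + (t : ℂ) • (1 : Matrix (Fin n) (Fin n) ℂ))⁻¹ * δ *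
          (ρ + (t : ℂ) • (1 : Matrix (Fin n) (Fin n) ℂ))⁻¹) i j))
      = U * E * star U := by
    ext i j
    rw [Matrix.of_apply]
    have hFij : ∀ t ∈ Set.Ioi (0:ℝ),
        ((ρ + (t : ℂ) • (1 : Matrix (Fin n) (Fin n) ℂ))⁻¹ * δ *
          (ρ + (t : ℂ) • (1 : Matrix (Fin n) (Fin n) ℂ))⁻¹) i j
        = ∑ q, ∑ p, (U i p * δ' p q * star U q j) * (c p t * c q t) := by
      intro t ht
      rw [hinv t ht]
      have : U * diagonal (fun p => c p t) * star U * δ *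
          (U * diagonal (fun p => c p t) * star U)
          = U * (diagonal (fun p => c p t) * δ' * diagonal (fun p => c p t)) * star U := by
        simp only [hδ'def, Matrix.mul_assoc]
      rw [this]
      simp only [Matrix.mul_apply, Matrix.diagonal_apply, Finset.sum_mul, Finset.mul_sum,
        ite_mul, mul_ite, zero_mul, mul_zero, Finset.sum_ite_eq, Finset.sum_ite_eq',
        Finset.mem_univ, if_true]
      refine Finset.sum_congr rfl fun q _ => Finset.sum_congr rfl fun p _ => ?_
      ring
    rw [setIntegral_congr_fun measurableSet_Ioi hFij]
    rw [integral_finset_sum _ (fun q _ => integrable_finset_sum _ (fun p _ =>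
      ((hInt p q).const_mul _)))]
    simp only [Matrix.mul_apply, hEdef, Matrix.of_apply]
    refine Finset.sum_congr rfl fun q _ => ?_
    rw [integral_finset_sum _ (fun p _ => (hInt p q).const_mul _)]
    rw [Finset.sum_mul]
    refine Finset.sum_congr rfl fun p _ => ?_
    rw [integral_const_mul]
    ring
  rw [hM, hspec]
  have : U * diagonal (fun p => (lam p : ℂ)) * star U * (U * E * star U)
      = U * (diagonal (fun p => (lam p : ℂ)) * E) * star U := by
    calc U * diagonal (fun p => (lam p : ℂ)) * star U * (U * E * star U)
        = U * (diagonal (fun p => (lam p : ℂ)) * (star U * U) * E) * star U := by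
          simp only [Matrix.mul_assoc]
      _ = _ := by rw [hUsU, Matrix.mul_one]
  rw [this, Matrix.trace_mul_cycle, ← Matrix.mul_assoc, hUsU, Matrix.one_mul]
  -- trace of diagonal * E
  have hEpp : ∀ p : Fin n, E p p = δ' p p * (((lam p)⁻¹ : ℝ) : ℂ) := by
    intro p
    have h1 : (∫ t in Set.Ioi (0:ℝ), c p t * c p t)
        = (((lam p)⁻¹ : ℝ) : ℂ) := by
      rw [setIntegral_congr_fun measurableSet_Ioi (fun t _ => hccEq p p t)]
      have h2 : (∫ t in Set.Ioi (0:ℝ), (((lam p + t)⁻¹ * (lam p + t)⁻¹ : ℝ) : ℂ))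
          = ((∫ t in Set.Ioi (0:ℝ), (lam p + t)⁻¹ * (lam p + t)⁻¹ : ℝ) : ℂ) :=
        integral_ofReal
      rw [h2]
      norm_cast
      rw [show (fun t : ℝ => (lam p + t)⁻¹ * (lam p + t)⁻¹)
          = fun t : ℝ => ((lam p + t) * (lam p + t))⁻¹ by funext t; rw [mul_inv]]
      exact aux_integral (hlam p)
    simp [hEdef, h1]
  have htr : (diagonal (fun p => (lam p : ℂ)) * E).trace = ∑ p, δ' p p := by
    rw [Matrix.trace]
    simp only [Matrix.diag_apply, Matrix.diagonal_mul]
    refine Finset.sum_congr rfl fun p _ => ?_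
    rw [hEpp p]
    rw [show ((lam p : ℂ)) * (δ' p p * (((lam p)⁻¹ : ℝ) : ℂ))
        = δ' p p * ((lam p : ℂ) * (((lam p)⁻¹:ℝ):ℂ)) by ring]
    have h3 : ((lam p : ℂ)) * (((lam p)⁻¹:ℝ):ℂ) = 1 := by
      push_cast
      exact mul_inv_cancel₀ (by exact_mod_cast (hlam p).ne')
    rw [h3, mul_one]
  rw [htr]
  have h4 : ∑ p, δ' p p = δ'.trace := rfl
  rw [h4, hδ'def, Matrix.trace_mul_cycle, hUU, Matrix.one_mul]
end

section
/- For λ with L*(λ) ≻ 0, the quadratic form of the Jacobian ∇h|_λ satisfies ⟨δ, ∇h|_λ(δ)⟩ = ‖L*(λ)^{-1/2} L*(δ) L*(λ)^{-1/2}‖² ≥ 0, with equality iff L*(δ) = 0; in particular ∇h|_λ is positive definite on the orthogonal complement of ker L*. -/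
open scoped ComplexOrder
open Matrix

/-- The real-linear map `L : ρ ↦ Σ_k G_left k * ρ * G_right k`. -/
noncomputable def Lmap {N p q m : ℕ} (Gl : Fin N → Matrix (Fin p) (Fin m) ℂ)
    (Gr : Fin N → Matrix (Fin m) (Fin q) ℂ) (ρ : Matrix (Fin m) (Fin m) ℂ) :
    Matrix (Fin p) (Fin q) ℂ :=
  ∑ k, Gl k * ρ * Gr k

/-- The claimed adjoint `L* : λ ↦ (Σ_k (G_left k)* λ (G_right k)*)_Herm`,
where `(M)_Herm = (M + M*)/2`. -/
noncomputable def Lstar {N p q m : ℕ} (Gl : Fin N → Matrix (Fin p) (Fin m) ℂ)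
    (Gr : Fin N → Matrix (Fin m) (Fin q) ℂ) (lam : Matrix (Fin p) (Fin q) ℂ) :
    Matrix (Fin m) (Fin m) ℂ :=
  ((1 : ℂ) / 2) • ((∑ k, (Gl k)ᴴ * lam * (Gr k)ᴴ) + (∑ k, (Gl k)ᴴ * lam * (Gr k)ᴴ)ᴴ)



lemma lstar_isHermitian {N p q m : ℕ} (Gl : Fin N → Matrix (Fin p) (Fin m) ℂ)
    (Gr : Fin N → Matrix (Fin m) (Fin q) ℂ) (x : Matrix (Fin p) (Fin q) ℂ) :
    (Lstar Gl Gr x).IsHermitian := by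
  unfold Lstar
  simp [Matrix.IsHermitian, conjTranspose_smul, conjTranspose_add, add_comm]

lemma trace_normsq {p q : ℕ} (X : Matrix (Fin p) (Fin q) ℂ) :
    ((Xᴴ * X).trace) = ((∑ j, ∑ i, Complex.normSq (X i j) : ℝ) : ℂ) := by
  simp only [Matrix.trace, Matrix.diag, Matrix.mul_apply, Matrix.conjTranspose_apply,
    ]
  push_cast
  exact Finset.sum_congr rfl fun j _ => Finset.sum_congr rfl fun i _ =>
    (Complex.normSq_eq_conj_mul_self).symm

lemma adjoint_trace {N p q m : ℕ} (Gl : Fin N → Matrix (Fin p) (Fin m) ℂ)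
    (Gr : Fin N → Matrix (Fin m) (Fin q) ℂ) (δ : Matrix (Fin p) (Fin q) ℂ)
    (ρ : Matrix (Fin m) (Fin m) ℂ) (hρ : ρ.IsHermitian) :
    ((δᴴ * Lmap Gl Gr ρ).trace).re = ((Lstar Gl Gr δ * ρ).trace).re := by
  set M : Matrix (Fin m) (Fin m) ℂ := ∑ k, (Gl k)ᴴ * δ * (Gr k)ᴴ with hM
  have h1 : (δᴴ * Lmap Gl Gr ρ).trace = (Mᴴ * ρ).trace := by
    rw [Lmap, Matrix.mul_sum, trace_sum, hM, conjTranspose_sum, Finset.sum_mul, trace_sum]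
    refine Finset.sum_congr rfl fun k _ => ?_
    simp only [conjTranspose_mul, conjTranspose_conjTranspose]
    rw [show δᴴ * (Gl k * ρ * Gr k) = (δᴴ * Gl k) * ρ * Gr k by simp [Matrix.mul_assoc],
      Matrix.trace_mul_cycle]
  have h2 : (M * ρ).trace = star ((Mᴴ * ρ).trace) := by
    rw [← trace_conjTranspose, conjTranspose_mul, conjTranspose_conjTranspose, hρ.eq,
      trace_mul_comm]
  have h3 : Lstar Gl Gr δ * ρ = ((1:ℂ)/2) • (M * ρ + Mᴴ * ρ) := by
    rw [Lstar, smul_mul_assoc, add_mul]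
  rw [h1, h3]
  simp only [trace_smul, trace_add, h2, smul_eq_mul]
  set z := (Mᴴ * ρ).trace
  have h4 : star z + z = ((2 * z.re : ℝ) : ℂ) := by
    rw [add_comm]; exact Complex.add_conj z
  rw [h4]
  simp [Complex.ofReal_mul]

/-- for `λ` with `L*(λ) ≻ 0`, the quadratic form of the Jacobian
`∇h|_λ(δ) = L(L*(λ)⁻¹ L*(δ) L*(λ)⁻¹)` satisfies
`⟨δ, ∇h|_λ(δ)⟩ = ‖L*(λ)^{-1/2} L*(δ) L*(λ)^{-1/2}‖² ≥ 0` with equality iff `L*(δ) = 0`. -/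
theorem jacobian_quadratic_form {N p q m : ℕ} (Gl : Fin N → Matrix (Fin p) (Fin m) ℂ)
    (Gr : Fin N → Matrix (Fin m) (Fin q) ℂ) (lam : Matrix (Fin p) (Fin q) ℂ)
    (hpos : (Lstar Gl Gr lam).PosDef) (δ : Matrix (Fin p) (Fin q) ℂ) :
    ((δᴴ * Lmap Gl Gr ((Lstar Gl Gr lam)⁻¹ * Lstar Gl Gr δ * (Lstar Gl Gr lam)⁻¹)).trace).re =
        ((((hpos.1.cfc fun x => (Real.sqrt x)⁻¹) * Lstar Gl Gr δ *
            (hpos.1.cfc fun x => (Real.sqrt x)⁻¹))ᴴ *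
          ((hpos.1.cfc fun x => (Real.sqrt x)⁻¹) * Lstar Gl Gr δ *
            (hpos.1.cfc fun x => (Real.sqrt x)⁻¹))).trace).re ∧
      0 ≤ ((δᴴ * Lmap Gl Gr
            ((Lstar Gl Gr lam)⁻¹ * Lstar Gl Gr δ * (Lstar Gl Gr lam)⁻¹)).trace).re ∧
      (((δᴴ * Lmap Gl Gr
            ((Lstar Gl Gr lam)⁻¹ * Lstar Gl Gr δ * (Lstar Gl Gr lam)⁻¹)).trace).re = 0 ↔
        Lstar Gl Gr δ = 0) := by
  have hA : (Lstar Gl Gr lam).IsHermitian := hpos.1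
  set A := Lstar Gl Gr lam with hAdef
  set D := Lstar Gl Gr δ with hDdef
  have hD : D.IsHermitian := lstar_isHermitian Gl Gr δ
  have hAinv : (A⁻¹).IsHermitian := hA.inv
  set U : Matrix (Fin m) (Fin m) ℂ := (IsHermitian.eigenvectorUnitary hA : Matrix (Fin m) (Fin m) ℂ) with hUdef
  set ev := hA.eigenvalues with hevdef
  set S := hA.cfc (fun x => (Real.sqrt x)⁻¹) with hSdef
  have hUU : star U * U = 1 := mem_unitaryGroup_iff'.mp (IsHermitian.eigenvectorUnitary hA).2
  have hUU' : U * star U = 1 := mem_unitaryGroup_iff.mp (IsHermitian.eigenvectorUnitary hA).2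
  have hev : ∀ i, 0 < ev i := fun i => hpos.eigenvalues_pos i
  have key : ∀ d1 d2 : Matrix (Fin m) (Fin m) ℂ,
      (U * d1 * star U) * (U * d2 * star U) = U * (d1 * d2) * star U := by
    intro d1 d2
    rw [show (U * d1 * star U) * (U * d2 * star U)
        = U * d1 * (star U * U) * (d2 * star U) by simp only [Matrix.mul_assoc], hUU, mul_one]
    simp only [Matrix.mul_assoc]
  have hspec := hA.spectral_theorem
  have hAinv_eq : A⁻¹ = U * diagonal (fun i => (RCLike.ofReal (ev i) : ℂ)⁻¹) * star U := by
    apply Matrix.inv_eq_right_inv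
    conv_lhs => rw [hspec]
    rw [show Matrix.diagonal (RCLike.ofReal ∘ hA.eigenvalues)
        = diagonal (fun i => (RCLike.ofReal (ev i) : ℂ)) from rfl, Unitary.conjStarAlgAut_apply, ← hUdef, key,
      diagonal_mul_diagonal]
    have : (fun i => (RCLike.ofReal (ev i) : ℂ) * (RCLike.ofReal (ev i) : ℂ)⁻¹) = fun _ => 1 := by
      funext i
      exact mul_inv_cancel₀ (RCLike.ofReal_ne_zero.mpr (hev i).ne')
    rw [this, diagonal_one, mul_one, hUU']
  have hSS : S * S = A⁻¹ := by
    rw [hSdef, Matrix.IsHermitian.cfc, Unitary.conjStarAlgAut_apply, ← hUdef, key, diagonal_mul_diagonal, hAinv_eq]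
    refine congrArg (fun M => U * M * star U) (congrArg Matrix.diagonal ?_)
    funext i
    simp only [Function.comp_apply]
    norm_cast
    rw [← mul_inv, Real.mul_self_sqrt (hev i).le]
  have hSh : Sᴴ = S := by
    rw [hSdef, Matrix.IsHermitian.cfc, Unitary.conjStarAlgAut_apply]
    have hst : star ((RCLike.ofReal : ℝ → ℂ) ∘ (fun x => (Real.sqrt x)⁻¹) ∘ hA.eigenvalues)
        = (RCLike.ofReal : ℝ → ℂ) ∘ (fun x => (Real.sqrt x)⁻¹) ∘ hA.eigenvalues := by
      funext i
      simp [Pi.star_apply, RCLike.star_def, RCLike.conj_ofReal]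
    simp only [conjTranspose_mul, diagonal_conjTranspose, star_eq_conjTranspose,
      conjTranspose_conjTranspose, Matrix.mul_assoc, hst]
  have hρ : (A⁻¹ * D * A⁻¹).IsHermitian := by
    show (A⁻¹ * D * A⁻¹)ᴴ = A⁻¹ * D * A⁻¹
    simp [conjTranspose_mul, hAinv.eq, hD.eq, Matrix.mul_assoc]
  have hL : ((δᴴ * Lmap Gl Gr (A⁻¹ * D * A⁻¹)).trace).re
      = ((D * (A⁻¹ * D * A⁻¹)).trace).re := adjoint_trace Gl Gr δ _ hρ
  have hX : (S * D * S)ᴴ = S * D * S := by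
    simp [conjTranspose_mul, hSh, hD.eq, Matrix.mul_assoc]
  have hR : (((S * D * S)ᴴ * (S * D * S)).trace) = ((D * (A⁻¹ * D * A⁻¹)).trace) := by
    rw [hX, show S * D * S * (S * D * S) = S * (D * (S * S) * D * S) by
      simp only [Matrix.mul_assoc], trace_mul_comm, show D * (S * S) * D * S * S
      = D * ((S * S) * D * (S * S)) by simp only [Matrix.mul_assoc], hSS]
  have hnormsq := trace_normsq (S * D * S)
  have hre : (((S * D * S)ᴴ * (S * D * S)).trace).re
      = ∑ j, ∑ i, Complex.normSq ((S * D * S) i j) := by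
    rw [hnormsq, Complex.ofReal_re]
  have hSdet : IsUnit S.det := by
    have hAdet : A.det ≠ 0 := hpos.det_pos.ne'
    have h1 : S.det * S.det = (A⁻¹).det := by rw [← det_mul, hSS]
    rw [det_nonsing_inv, Ring.inverse_eq_inv'] at h1
    have hne : S.det ≠ 0 := by
      intro h
      rw [h, mul_zero] at h1
      exact inv_ne_zero hAdet h1.symm
    exact hne.isUnit
  have main : ((δᴴ * Lmap Gl Gr (A⁻¹ * D * A⁻¹)).trace).re
      = (((S * D * S)ᴴ * (S * D * S)).trace).re := by rw [hL, ← hR]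
  refine ⟨main, ?_, ?_⟩
  · rw [main, hre]
    exact Finset.sum_nonneg fun j _ => Finset.sum_nonneg fun i _ => Complex.normSq_nonneg _
  · constructor
    · intro h0
      rw [main, hre] at h0
      have hzero : S * D * S = 0 := by
        ext i j
        have h1 := (Finset.sum_eq_zero_iff_of_nonneg
          (fun j _ => Finset.sum_nonneg fun i _ => Complex.normSq_nonneg _)).mp h0 j
          (Finset.mem_univ j)
        have h2 := (Finset.sum_eq_zero_iff_of_nonneg
          (fun i _ => Complex.normSq_nonneg _)).mp h1 i (Finset.mem_univ i)
        simpa using Complex.normSq_eq_zero.mp h2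
      have hDeq : D = S⁻¹ * (S * D * S) * S⁻¹ := by
        rw [show S⁻¹ * (S * D * S) * S⁻¹ = (S⁻¹ * S) * (D * (S * S⁻¹)) by
          simp only [Matrix.mul_assoc], Matrix.nonsing_inv_mul S hSdet,
          Matrix.mul_nonsing_inv S hSdet, one_mul, mul_one]
      rw [hDeq, hzero]
      simp
    · intro h0
      have hD0 : D = 0 := h0
      rw [hL, hD0]
      simp
end

section
/- The Jacobian of κ(λ) = (1/e) L(exp(−L*(λ))) is ∇κ|_λ(δ) = −(1/e) L(M_{exp(−L*(λ))}(L*(δ))), where M_C(Δ) = ∫₀¹ C^{1−t} Δ C^{t} dt, and this Jacobian is self-adjoint and negative semidefinite: ⟨δ, ∇κ|_λ(δ)⟩ = −(1/e)∫₀¹ trace((A^{t/2} L*(δ) A^{(1−t)/2})(A^{(1−t)/2} L*(δ) A^{t/2})) dt ≤ 0 with A = exp(−L*(λ)), with equality iff L*(δ) = 0. -/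
open scoped ComplexOrder
open Matrix

open MeasureTheory

/-- The scrambled multiplication `M_{e^{-H}}(Δ) = ∫₀¹ e^{-(1-t)H} Δ e^{-tH} dt`
for a Hermitian `H` (defined spectrally), applied entrywise. -/
noncomputable def Mexp {m : ℕ} {H : Matrix (Fin m) (Fin m) ℂ} (hH : H.IsHermitian)
    (Δ : Matrix (Fin m) (Fin m) ℂ) : Matrix (Fin m) (Fin m) ℂ :=
  Matrix.of fun i j =>
    ∫ t in (0 : ℝ)..1,
      ((hH.cfc fun x => Real.exp (-((1 - t) * x))) * Δ *
        (hH.cfc fun x => Real.exp (-(t * x)))) i j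

/-- The Jacobian `∇κ|_λ(δ) = −(1/e) L(M_{exp(−L*(λ))}(L*(δ)))` of
`κ(λ) = (1/e) L(exp(−L*(λ)))`. -/
noncomputable def gradKappa {N p q m : ℕ} (Gl : Fin N → Matrix (Fin p) (Fin m) ℂ)
    (Gr : Fin N → Matrix (Fin m) (Fin q) ℂ) {lam : Matrix (Fin p) (Fin q) ℂ}
    (hH : (Lstar Gl Gr lam).IsHermitian) (δ : Matrix (Fin p) (Fin q) ℂ) :
    Matrix (Fin p) (Fin q) ℂ :=
  ((-(1 / Real.exp 1) : ℝ) : ℂ) • Lmap Gl Gr (Mexp hH (Lstar Gl Gr δ))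

section CfcLemmas

variable {m : ℕ} {H : Matrix (Fin m) (Fin m) ℂ} (hH : H.IsHermitian)

lemma cfc_mul_cfc (f g : ℝ → ℝ) :
    hH.cfc f * hH.cfc g = hH.cfc (fun x => f x * g x) := by
  unfold Matrix.IsHermitian.cfc
  simp only [Unitary.conjStarAlgAut_apply, Unitary.coe_star]
  have h1 : (star (hH.eigenvectorUnitary : Matrix (Fin m) (Fin m) ℂ)) *
      (hH.eigenvectorUnitary : Matrix (Fin m) (Fin m) ℂ) = 1 :=
    Unitary.star_mul_self_of_mem hH.eigenvectorUnitary.2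
  simp only [mul_assoc]
  rw [← mul_assoc (star _) _, h1, one_mul, ← mul_assoc (diagonal _), diagonal_mul_diagonal]
  congr 1
  ext i
  simp [Function.comp]

lemma cfc_one' : hH.cfc (fun _ => (1:ℝ)) = 1 := by
  unfold Matrix.IsHermitian.cfc
  simp only [Unitary.conjStarAlgAut_apply, Unitary.coe_star]
  have h1 : (hH.eigenvectorUnitary : Matrix (Fin m) (Fin m) ℂ) *
      (star (hH.eigenvectorUnitary : Matrix (Fin m) (Fin m) ℂ)) = 1 :=
    Unitary.mul_star_self_of_mem hH.eigenvectorUnitary.2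
  have : diagonal (RCLike.ofReal ∘ (fun _ => (1:ℝ)) ∘ hH.eigenvalues)
      = (1 : Matrix (Fin m) (Fin m) ℂ) := by
    ext i j
    by_cases h : i = j <;> simp [diagonal, h, Matrix.one_apply]
  rw [this, mul_one, h1]

lemma cfcStar' (f : ℝ → ℝ) : star (hH.cfc f) = hH.cfc f := by
  unfold Matrix.IsHermitian.cfc
  simp only [Unitary.conjStarAlgAut_apply, Unitary.coe_star]
  rw [StarMul.star_mul, StarMul.star_mul, star_star, mul_assoc]
  congr 1
  congr 1
  rw [star_eq_conjTranspose, diagonal_conjTranspose,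
    show star ((RCLike.ofReal : ℝ → ℂ) ∘ f ∘ hH.eigenvalues)
        = ((RCLike.ofReal : ℝ → ℂ) ∘ f ∘ hH.eigenvalues) from
      funext fun k => by simp]

lemma cfc_herm (f : ℝ → ℝ) : (hH.cfc f)ᴴ = hH.cfc f := by
  rw [← star_eq_conjTranspose]; exact cfcStar' hH f

lemma cfc_entry (f : ℝ → ℝ) (i j : Fin m) :
    hH.cfc f i j = ∑ k, (hH.eigenvectorUnitary : Matrix (Fin m) (Fin m) ℂ) i k *
      (f (hH.eigenvalues k) : ℂ) *
        star ((hH.eigenvectorUnitary : Matrix (Fin m) (Fin m) ℂ) j k) := by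
  unfold Matrix.IsHermitian.cfc
  simp only [Unitary.conjStarAlgAut_apply, Unitary.coe_star]
  rw [mul_assoc, mul_apply]
  congr 1
  ext k
  rw [diagonal_mul]
  simp only [Matrix.star_apply, Function.comp_apply]
  rw [mul_assoc]
  rfl

lemma cont_cfc_entry {F : ℝ → ℝ → ℝ} (hF : ∀ x, Continuous fun t => F t x) (i j : Fin m) :
    Continuous fun t => hH.cfc (F t) i j := by
  simp only [cfc_entry]
  refine continuous_finset_sum _ fun k _ => ?_
  exact (continuous_const.mul ((Complex.continuous_ofReal.comp (hF _)))).mul continuous_const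

lemma cont_triple_entry (X : Matrix (Fin m) (Fin m) ℂ) {F G : ℝ → ℝ → ℝ}
    (hF : ∀ x, Continuous fun t => F t x) (hG : ∀ x, Continuous fun t => G t x) (i j : Fin m) :
    Continuous fun t => (hH.cfc (F t) * X * hH.cfc (G t)) i j := by
  simp only [Matrix.mul_apply]
  refine continuous_finset_sum _ fun b _ => ?_
  refine Continuous.mul (continuous_finset_sum _ fun a _ => ?_) (cont_cfc_entry hH hG b j)
  exact (cont_cfc_entry hH hF i a).mul continuous_const

lemma cont_trace_triple (Z X : Matrix (Fin m) (Fin m) ℂ) {F G : ℝ → ℝ → ℝ}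
    (hF : ∀ x, Continuous fun t => F t x) (hG : ∀ x, Continuous fun t => G t x) :
    Continuous fun t => (Z * (hH.cfc (F t) * X * hH.cfc (G t))).trace := by
  simp only [Matrix.trace, Matrix.diag, Matrix.mul_apply (M := Z)]
  refine continuous_finset_sum _ fun i _ => continuous_finset_sum _ fun j _ => ?_
  exact continuous_const.mul (cont_triple_entry hH X hF hG j i)

lemma intervalIntegral_re {a b : ℝ} (f : ℝ → ℂ) (hf : IntervalIntegrable f volume a b) :
    (∫ t in a..b, f t).re = ∫ t in a..b, (f t).re := by
  simp only [intervalIntegral]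
  rw [Complex.sub_re]
  simp only [← RCLike.re_to_complex]
  rw [integral_re hf.1, integral_re hf.2]

lemma intervalIntegral_conj {a b : ℝ} (f : ℝ → ℂ) :
    (∫ t in a..b, (starRingEnd ℂ) (f t)) = (starRingEnd ℂ) (∫ t in a..b, f t) := by
  simp only [intervalIntegral]
  rw [integral_conj, integral_conj, map_sub]

lemma trace_mul_ofIntegral {P : ℝ → Matrix (Fin m) (Fin m) ℂ}
    (hP : ∀ i j, Continuous fun t => P t i j) (Z : Matrix (Fin m) (Fin m) ℂ) :
    (Z * Matrix.of fun i j => ∫ t in (0:ℝ)..1, P t i j).trace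
      = ∫ t in (0:ℝ)..1, (Z * P t).trace := by
  have int1 : ∀ (i j : Fin m), IntervalIntegrable (fun t => Z i j * P t j i) volume 0 1 :=
    fun i j => (continuous_const.mul (hP j i)).intervalIntegrable _ _
  have h1 : ∀ i j : Fin m, Z i j * ∫ t in (0:ℝ)..1, P t j i = ∫ t in (0:ℝ)..1, Z i j * P t j i :=
    fun i j => (intervalIntegral.integral_const_mul _ _).symm
  simp only [Matrix.trace, Matrix.diag, Matrix.mul_apply, Matrix.of_apply, h1]
  have h2 : ∀ i : Fin m, (∑ j, ∫ t in (0:ℝ)..1, Z i j * P t j i)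
      = ∫ t in (0:ℝ)..1, ∑ j, Z i j * P t j i := fun i =>
    (intervalIntegral.integral_finset_sum (fun j _ => int1 i j)).symm
  simp only [h2]
  exact (intervalIntegral.integral_finset_sum (fun i _ =>
    (continuous_finset_sum _ fun j _ =>
      continuous_const.mul (hP j i)).intervalIntegrable _ _)).symm

lemma contF1 (x : ℝ) : Continuous fun t : ℝ => Real.exp (-((1 - t) * x)) := by fun_prop
lemma contF2 (x : ℝ) : Continuous fun t : ℝ => Real.exp (-(t * x)) := by fun_prop
lemma contA (x : ℝ) : Continuous fun t : ℝ => Real.exp (-(t / 2 * x)) := by fun_prop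
lemma contB (x : ℝ) : Continuous fun t : ℝ => Real.exp (-((1 - t) / 2 * x)) := by fun_prop

lemma mexp_herm {X : Matrix (Fin m) (Fin m) ℂ} (hX : X.IsHermitian) :
    (Mexp hH X).IsHermitian := by
  ext i j
  rw [conjTranspose_apply, Mexp, Matrix.of_apply, Matrix.of_apply]
  have key : ∀ t : ℝ,
      star (((hH.cfc fun x => Real.exp (-((1 - t) * x))) * X *
          (hH.cfc fun x => Real.exp (-(t * x)))) j i)
        = ((hH.cfc fun x => Real.exp (-(t * x))) * X *
            (hH.cfc fun x => Real.exp (-((1 - t) * x)))) i j := by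
    intro t
    rw [← conjTranspose_apply, conjTranspose_mul, conjTranspose_mul, cfc_herm, cfc_herm, hX.eq,
      ← mul_assoc]
  have : (∫ t in (0:ℝ)..1, ((hH.cfc fun x => Real.exp (-((1 - t) * x))) * X *
        (hH.cfc fun x => Real.exp (-(t * x)))) j i)
      = ∫ t in (0:ℝ)..1, (starRingEnd ℂ) (((hH.cfc fun x => Real.exp (-(t * x))) * X *
        (hH.cfc fun x => Real.exp (-((1 - t) * x)))) i j) := by
    refine intervalIntegral.integral_congr fun t _ => ?_
    rw [← key t, Complex.star_def, Complex.conj_conj]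
  rw [this, intervalIntegral_conj, Complex.star_def, Complex.conj_conj]
  have sub : (∫ t in (0:ℝ)..1, ((hH.cfc fun x => Real.exp (-(t * x))) * X *
        (hH.cfc fun x => Real.exp (-((1 - t) * x)))) i j)
      = ∫ t in (0:ℝ)..1, ((hH.cfc fun x => Real.exp (-((1 - t) * x))) * X *
        (hH.cfc fun x => Real.exp (-(t * x)))) i j := by
    have := intervalIntegral.integral_comp_sub_left
      (a := (0:ℝ)) (b := 1) (fun s => ((hH.cfc fun x => Real.exp (-((1 - s) * x))) * X *
        (hH.cfc fun x => Real.exp (-(s * x)))) i j) 1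
    norm_num at this
    exact this
  rw [sub]

lemma trace_mul_Mexp (Z X : Matrix (Fin m) (Fin m) ℂ) :
    (Z * Mexp hH X).trace = ∫ t in (0:ℝ)..1,
      (Z * ((hH.cfc fun x => Real.exp (-((1 - t) * x))) * X *
        (hH.cfc fun x => Real.exp (-(t * x))))).trace :=
  trace_mul_ofIntegral (fun i j => cont_triple_entry hH X contF1 contF2 i j) Z

lemma sym_integral (X₁ X : Matrix (Fin m) (Fin m) ℂ) :
    (∫ t in (0:ℝ)..1, ((X₁ * ((hH.cfc fun x => Real.exp (-((1 - t) * x))) * X *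
        (hH.cfc fun x => Real.exp (-(t * x))))).trace).re)
      = ∫ t in (0:ℝ)..1, ((X * ((hH.cfc fun x => Real.exp (-((1 - t) * x))) * X₁ *
        (hH.cfc fun x => Real.exp (-(t * x))))).trace).re := by
  have point : ∀ t : ℝ, ((X₁ * ((hH.cfc fun x => Real.exp (-((1 - t) * x))) * X *
        (hH.cfc fun x => Real.exp (-(t * x))))).trace)
      = ((X * ((hH.cfc fun x => Real.exp (-((1 - (1 - t)) * x))) * X₁ *
        (hH.cfc fun x => Real.exp (-((1 - t) * x))))).trace) := by
    intro t
    have e : (fun x : ℝ => Real.exp (-((1 - (1 - t)) * x))) = fun x => Real.exp (-(t * x)) :=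
      funext fun x => by congr 1; ring
    rw [e]
    set P := hH.cfc fun x => Real.exp (-((1 - t) * x))
    set Q := hH.cfc fun x => Real.exp (-(t * x))
    have e1 : X₁ * (P * X * Q) = (X₁ * P * X) * Q := by simp only [← Matrix.mul_assoc]
    have e2 : X * (Q * X₁ * P) = (X * Q * X₁) * P := by simp only [← Matrix.mul_assoc]
    rw [e1, e2, trace_mul_comm, trace_mul_comm (X * Q * X₁) P,
      show Q * (X₁ * P * X) = (Q * X₁) * (P * X) by simp only [← Matrix.mul_assoc],
      show P * (X * Q * X₁) = (P * X) * (Q * X₁) by simp only [← Matrix.mul_assoc],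
      trace_mul_comm]
  simp only [point]
  have := intervalIntegral.integral_comp_sub_left
    (a := (0:ℝ)) (b := 1) (fun s => ((X * ((hH.cfc fun x => Real.exp (-((1 - s) * x))) * X₁ *
      (hH.cfc fun x => Real.exp (-(s * x))))).trace).re) 1
  rw [show (1:ℝ) - 1 = 0 by norm_num, show (1:ℝ) - 0 = 1 by norm_num] at this
  exact this

lemma cfc_exp_cancel (c : ℝ) :
    hH.cfc (fun x => Real.exp (c * x)) * hH.cfc (fun x => Real.exp (-(c * x))) = 1 := by
  have e : (fun x : ℝ => Real.exp (c * x) * Real.exp (-(c * x))) = fun _ => (1:ℝ) := by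
    funext x
    rw [← Real.exp_add]
    norm_num
  rw [cfc_mul_cfc, e, cfc_one']

lemma cfc_exp_cancel' (c : ℝ) :
    hH.cfc (fun x => Real.exp (-(c * x))) * hH.cfc (fun x => Real.exp (c * x)) = 1 := by
  have e : (fun x : ℝ => Real.exp (-(c * x)) * Real.exp (c * x)) = fun _ => (1:ℝ) := by
    funext x
    rw [← Real.exp_add]
    norm_num
  rw [cfc_mul_cfc, e, cfc_one']

lemma sandwich (X : Matrix (Fin m) (Fin m) ℂ) (c d : ℝ) :
    hH.cfc (fun x => Real.exp (c * x)) * ((hH.cfc fun x => Real.exp (-(c * x))) * X *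
      (hH.cfc fun x => Real.exp (-(d * x)))) * hH.cfc (fun x => Real.exp (d * x)) = X := by
  rw [show hH.cfc (fun x => Real.exp (c * x)) * ((hH.cfc fun x => Real.exp (-(c * x))) * X *
      (hH.cfc fun x => Real.exp (-(d * x)))) * hH.cfc (fun x => Real.exp (d * x))
    = (hH.cfc (fun x => Real.exp (c * x)) * hH.cfc (fun x => Real.exp (-(c * x)))) * X *
      ((hH.cfc fun x => Real.exp (-(d * x))) * hH.cfc (fun x => Real.exp (d * x))) from by
        simp only [← Matrix.mul_assoc],
    cfc_exp_cancel, cfc_exp_cancel', one_mul, mul_one]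

lemma trace_BBH_re (B : Matrix (Fin m) (Fin m) ℂ) :
    ((B * Bᴴ).trace).re = ∑ i, ∑ j, Complex.normSq (B i j) := by
  simp [Matrix.trace, Matrix.diag, Matrix.mul_apply, conjTranspose_apply, Complex.star_def,
    Complex.mul_conj, Complex.re_sum]

end CfcLemmas

section LstarLemmas

variable {N p q m : ℕ} (Gl : Fin N → Matrix (Fin p) (Fin m) ℂ)
    (Gr : Fin N → Matrix (Fin m) (Fin q) ℂ)

lemma lstar_herm (δ : Matrix (Fin p) (Fin q) ℂ) : (Lstar Gl Gr δ).IsHermitian := by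
  unfold Lstar
  rw [Matrix.IsHermitian, conjTranspose_smul, conjTranspose_add, conjTranspose_conjTranspose]
  rw [add_comm ((∑ k, (Gl k)ᴴ * δ * (Gr k)ᴴ)ᴴ)]
  congr 1
  simp

lemma trace_dHmul_Lmap (δ : Matrix (Fin p) (Fin q) ℂ) (W : Matrix (Fin m) (Fin m) ℂ) :
    (δᴴ * Lmap Gl Gr W).trace = ((∑ k, (Gl k)ᴴ * δ * (Gr k)ᴴ)ᴴ * W).trace := by
  unfold Lmap
  rw [conjTranspose_sum, Matrix.mul_sum, trace_sum, Matrix.sum_mul, trace_sum]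
  refine Finset.sum_congr rfl fun k _ => ?_
  rw [conjTranspose_mul, conjTranspose_mul, conjTranspose_conjTranspose,
    conjTranspose_conjTranspose]
  rw [show δᴴ * (Gl k * W * Gr k) = (δᴴ * Gl k * W) * Gr k by simp only [← Matrix.mul_assoc]]
  rw [trace_mul_comm, Matrix.mul_assoc (Gr k)]

lemma re_trace_lstar (δ : Matrix (Fin p) (Fin q) ℂ) (W : Matrix (Fin m) (Fin m) ℂ)
    (hW : W.IsHermitian) :
    (((∑ k, (Gl k)ᴴ * δ * (Gr k)ᴴ)ᴴ * W).trace).re = ((Lstar Gl Gr δ * W).trace).re := by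
  set S := ∑ k, (Gl k)ᴴ * δ * (Gr k)ᴴ with hS
  have hz : (S * W).trace = star ((Sᴴ * W).trace) := by
    rw [← trace_conjTranspose, conjTranspose_mul, conjTranspose_conjTranspose, hW.eq,
      trace_mul_comm]
  unfold Lstar
  rw [← hS, Matrix.smul_mul, trace_smul, Matrix.add_mul, trace_add, hz, smul_eq_mul]
  simp only [Complex.star_def]
  set z := (Sᴴ * W).trace
  simp [Complex.mul_re, Complex.add_re, Complex.conj_re, Complex.add_im, Complex.conj_im]
  ring

lemma re_trace_conjTranspose_mul (M δ : Matrix (Fin p) (Fin q) ℂ) :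
    ((Mᴴ * δ).trace).re = ((δᴴ * M).trace).re := by
  have : (Mᴴ * δ).trace = star ((δᴴ * M).trace) := by
    rw [← trace_conjTranspose, conjTranspose_mul, conjTranspose_conjTranspose]
  rw [this, Complex.star_def, Complex.conj_re]

end LstarLemmas


set_option maxHeartbeats 2000000 in
/-- the Jacobian `∇κ|_λ` is self-adjoint and negative semidefinite:
`⟨δ, ∇κ|_λ(δ)⟩ = −(1/e)∫₀¹ trace((A^{t/2} L*(δ) A^{(1−t)/2})(A^{(1−t)/2} L*(δ) A^{t/2})) dt ≤ 0`
with `A = exp(−L*(λ))`, with equality iff `L*(δ) = 0`. -/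
theorem gradKappa_selfAdjoint_negSemidef {N p q m : ℕ}
    (Gl : Fin N → Matrix (Fin p) (Fin m) ℂ) (Gr : Fin N → Matrix (Fin m) (Fin q) ℂ)
    (lam : Matrix (Fin p) (Fin q) ℂ) (hH : (Lstar Gl Gr lam).IsHermitian) :
    (∀ δ δ₁ : Matrix (Fin p) (Fin q) ℂ,
        ((δ₁ᴴ * gradKappa Gl Gr hH δ).trace).re =
          (((gradKappa Gl Gr hH δ₁)ᴴ * δ).trace).re) ∧
    (∀ δ : Matrix (Fin p) (Fin q) ℂ,
        ((δᴴ * gradKappa Gl Gr hH δ).trace).re =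
          -(1 / Real.exp 1) *
            ∫ t in (0 : ℝ)..1,
              ((((hH.cfc fun x => Real.exp (-(t / 2 * x))) * Lstar Gl Gr δ *
                    (hH.cfc fun x => Real.exp (-((1 - t) / 2 * x)))) *
                  ((hH.cfc fun x => Real.exp (-((1 - t) / 2 * x))) * Lstar Gl Gr δ *
                    (hH.cfc fun x => Real.exp (-(t / 2 * x))))).trace).re) ∧
    (∀ δ : Matrix (Fin p) (Fin q) ℂ,
        ((δᴴ * gradKappa Gl Gr hH δ).trace).re ≤ 0 ∧
          (((δᴴ * gradKappa Gl Gr hH δ).trace).re = 0 ↔ Lstar Gl Gr δ = 0)) := by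
  have master : ∀ δ₁ δ : Matrix (Fin p) (Fin q) ℂ,
      ((δ₁ᴴ * gradKappa Gl Gr hH δ).trace).re
        = -(1 / Real.exp 1) * ∫ t in (0:ℝ)..1,
            ((Lstar Gl Gr δ₁ * ((hH.cfc fun x => Real.exp (-((1 - t) * x))) * Lstar Gl Gr δ *
              (hH.cfc fun x => Real.exp (-(t * x))))).trace).re := by
    intro δ₁ δ
    unfold gradKappa
    rw [Matrix.mul_smul, trace_smul, smul_eq_mul, Complex.re_ofReal_mul]
    congr 1
    rw [trace_dHmul_Lmap, re_trace_lstar Gl Gr δ₁ _ (mexp_herm hH (lstar_herm Gl Gr δ)),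
      trace_mul_Mexp,
      intervalIntegral_re _ ((cont_trace_triple hH (Lstar Gl Gr δ₁) (Lstar Gl Gr δ)
        contF1 contF2).intervalIntegrable _ _)]
  have key2 : ∀ δ : Matrix (Fin p) (Fin q) ℂ,
      ((δᴴ * gradKappa Gl Gr hH δ).trace).re =
        -(1 / Real.exp 1) *
          ∫ t in (0 : ℝ)..1,
            ((((hH.cfc fun x => Real.exp (-(t / 2 * x))) * Lstar Gl Gr δ *
                  (hH.cfc fun x => Real.exp (-((1 - t) / 2 * x)))) *
                ((hH.cfc fun x => Real.exp (-((1 - t) / 2 * x))) * Lstar Gl Gr δ *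
                  (hH.cfc fun x => Real.exp (-(t / 2 * x))))).trace).re := by
    intro δ
    rw [master δ δ]
    congr 1
    refine intervalIntegral.integral_congr fun t _ => ?_
    have hbb : (hH.cfc fun x => Real.exp (-((1 - t) / 2 * x))) *
        (hH.cfc fun x => Real.exp (-((1 - t) / 2 * x)))
        = hH.cfc fun x => Real.exp (-((1 - t) * x)) := by
      have e : (fun x : ℝ => Real.exp (-((1 - t) / 2 * x)) * Real.exp (-((1 - t) / 2 * x)))
          = fun x => Real.exp (-((1 - t) * x)) := by
        funext x; rw [← Real.exp_add]; congr 1; ring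
      rw [cfc_mul_cfc, e]
    have haa : (hH.cfc fun x => Real.exp (-(t / 2 * x))) *
        (hH.cfc fun x => Real.exp (-(t / 2 * x)))
        = hH.cfc fun x => Real.exp (-(t * x)) := by
      have e : (fun x : ℝ => Real.exp (-(t / 2 * x)) * Real.exp (-(t / 2 * x)))
          = fun x => Real.exp (-(t * x)) := by
        funext x; rw [← Real.exp_add]; congr 1; ring
      rw [cfc_mul_cfc, e]
    set a := hH.cfc fun x => Real.exp (-(t / 2 * x)) with ha
    set b := hH.cfc fun x => Real.exp (-((1 - t) / 2 * x)) with hb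
    set X := Lstar Gl Gr δ with hX
    congr 1
    have e1 : (a * X * b) * (b * X * a) = a * (X * (b * b) * X * a) := by
      simp only [← Matrix.mul_assoc]
    have e2 : (a * (X * (b * b) * X * a)).trace = ((X * (b * b) * X) * (a * a)).trace := by
      rw [trace_mul_comm]
      simp only [← Matrix.mul_assoc]
    rw [e1, e2, haa, hbb]
    simp only [← Matrix.mul_assoc]
  have hphi_eq : ∀ (δ : Matrix (Fin p) (Fin q) ℂ) (t : ℝ),
      ((((hH.cfc fun x => Real.exp (-(t / 2 * x))) * Lstar Gl Gr δ *
            (hH.cfc fun x => Real.exp (-((1 - t) / 2 * x)))) *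
          ((hH.cfc fun x => Real.exp (-((1 - t) / 2 * x))) * Lstar Gl Gr δ *
            (hH.cfc fun x => Real.exp (-(t / 2 * x))))).trace).re
        = ∑ i, ∑ j, Complex.normSq (((hH.cfc fun x => Real.exp (-(t / 2 * x))) *
            Lstar Gl Gr δ * (hH.cfc fun x => Real.exp (-((1 - t) / 2 * x)))) i j) := by
    intro δ t
    have hBH : ((hH.cfc fun x => Real.exp (-((1 - t) / 2 * x))) * Lstar Gl Gr δ *
          (hH.cfc fun x => Real.exp (-(t / 2 * x))))
        = ((hH.cfc fun x => Real.exp (-(t / 2 * x))) * Lstar Gl Gr δ *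
            (hH.cfc fun x => Real.exp (-((1 - t) / 2 * x))))ᴴ := by
      rw [conjTranspose_mul, conjTranspose_mul, cfc_herm, cfc_herm, (lstar_herm Gl Gr δ).eq]
      simp only [← Matrix.mul_assoc]
    rw [hBH, trace_BBH_re]
  refine ⟨fun δ δ₁ => ?_, key2, fun δ => ?_⟩
  · rw [master δ₁ δ, re_trace_conjTranspose_mul, master δ δ₁]
    congr 1
    exact sym_integral hH (Lstar Gl Gr δ₁) (Lstar Gl Gr δ)
  · have hval : ((δᴴ * gradKappa Gl Gr hH δ).trace).re
        = -(1 / Real.exp 1) * ∫ t in (0:ℝ)..1,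
            ∑ i, ∑ j, Complex.normSq (((hH.cfc fun x => Real.exp (-(t / 2 * x))) *
              Lstar Gl Gr δ * (hH.cfc fun x => Real.exp (-((1 - t) / 2 * x)))) i j) := by
      rw [key2 δ]
      congr 1
      exact intervalIntegral.integral_congr fun t _ => hphi_eq δ t
    have contφ : Continuous fun t : ℝ => ∑ i, ∑ j,
        Complex.normSq (((hH.cfc fun x => Real.exp (-(t / 2 * x))) *
          Lstar Gl Gr δ * (hH.cfc fun x => Real.exp (-((1 - t) / 2 * x)))) i j) := by
      refine continuous_finset_sum _ fun i _ => continuous_finset_sum _ fun j _ => ?_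
      exact Complex.continuous_normSq.comp (cont_triple_entry hH (Lstar Gl Gr δ) contA contB i j)
    have hint_nonneg : 0 ≤ ∫ t in (0:ℝ)..1,
        ∑ i, ∑ j, Complex.normSq (((hH.cfc fun x => Real.exp (-(t / 2 * x))) *
          Lstar Gl Gr δ * (hH.cfc fun x => Real.exp (-((1 - t) / 2 * x)))) i j) :=
      intervalIntegral.integral_nonneg zero_le_one fun u _ =>
        Finset.sum_nonneg fun i _ => Finset.sum_nonneg fun j _ => Complex.normSq_nonneg _
    constructor
    · rw [hval]
      have h1 : 0 ≤ (1 / Real.exp 1) * ∫ t in (0:ℝ)..1,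
          ∑ i, ∑ j, Complex.normSq (((hH.cfc fun x => Real.exp (-(t / 2 * x))) *
            Lstar Gl Gr δ * (hH.cfc fun x => Real.exp (-((1 - t) / 2 * x)))) i j) :=
        mul_nonneg (by positivity) hint_nonneg
      linarith
    · constructor
      · intro h0
        by_contra hXne
        have hpos : ∀ t ∈ Set.Ioo (0:ℝ) 1, 0 < ∑ i, ∑ j,
            Complex.normSq (((hH.cfc fun x => Real.exp (-(t / 2 * x))) *
              Lstar Gl Gr δ * (hH.cfc fun x => Real.exp (-((1 - t) / 2 * x)))) i j) := by
          intro t _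
          set B := (hH.cfc fun x => Real.exp (-(t / 2 * x))) * Lstar Gl Gr δ *
            (hH.cfc fun x => Real.exp (-((1 - t) / 2 * x))) with hB
          have hBne : B ≠ 0 := by
            intro hB0
            apply hXne
            have hs := sandwich hH (Lstar Gl Gr δ) (t / 2) ((1 - t) / 2)
            rw [← hB, hB0, Matrix.mul_zero, Matrix.zero_mul] at hs
            exact hs.symm
          obtain ⟨i, j, hij⟩ : ∃ i j, B i j ≠ 0 := by
            by_contra hc
            push_neg at hc
            exact hBne (by ext i j; simpa using hc i j)
          refine Finset.sum_pos'
            (fun i _ => Finset.sum_nonneg fun j _ => Complex.normSq_nonneg _)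
            ⟨i, Finset.mem_univ i, Finset.sum_pos'
              (fun j _ => Complex.normSq_nonneg _)
              ⟨j, Finset.mem_univ j, Complex.normSq_pos.mpr hij⟩⟩
        have hIpos := intervalIntegral.intervalIntegral_pos_of_pos_on
          (contφ.intervalIntegrable _ _) hpos zero_lt_one
        rw [hval] at h0
        have : 0 < (1 / Real.exp 1) * ∫ t in (0:ℝ)..1,
            ∑ i, ∑ j, Complex.normSq (((hH.cfc fun x => Real.exp (-(t / 2 * x))) *
              Lstar Gl Gr δ * (hH.cfc fun x => Real.exp (-((1 - t) / 2 * x)))) i j) :=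
          mul_pos (by positivity) hIpos
        linarith
      · intro h0
        rw [hval]
        simp [h0]
end

section
/- The function ρ ↦ trace(ρ log ρ) is strictly convex on the cone of Hermitian positive definite m×m matrices. -/
open Matrix
open scoped ComplexOrder

/-- `ρ ↦ trace (ρ log ρ)` (via the spectral matrix logarithm), extended by junk
off the Hermitian matrices. -/
noncomputable def traceRhoLogRho {m : ℕ} (ρ : Matrix (Fin m) (Fin m) ℂ) : ℝ :=
  if h : ρ.IsHermitian then ((ρ * h.cfc Real.log).trace).re else 0

namespace TraceEntropyAux

variable {m : ℕ}

noncomputable def dvec (W : Matrix (Fin m) (Fin m) ℂ) (lam : Fin m → ℝ) (k : Fin m) : ℝ :=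
  ∑ i, Complex.normSq (W k i) * lam i

lemma row_sum {W : Matrix (Fin m) (Fin m) ℂ} (hW : W * star W = 1) (k : Fin m) :
    ∑ i, Complex.normSq (W k i) = 1 := by
  have h : (W * star W) k k = (1 : Matrix (Fin m) (Fin m) ℂ) k k := by rw [hW]
  rw [mul_apply, one_apply_eq] at h
  have h2 : ∀ j ∈ Finset.univ, W k j * star W j k = (Complex.normSq (W k j) : ℂ) := fun j _ => by
    rw [star_apply, Complex.star_def, Complex.mul_conj]
  rw [Finset.sum_congr rfl h2] at h
  exact_mod_cast h

lemma col_sum {W : Matrix (Fin m) (Fin m) ℂ} (hW : star W * W = 1) (i : Fin m) :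
    ∑ k, Complex.normSq (W k i) = 1 := by
  have h : (star W * W) i i = (1 : Matrix (Fin m) (Fin m) ℂ) i i := by rw [hW]
  rw [mul_apply, one_apply_eq] at h
  have h2 : ∀ k ∈ Finset.univ, star W i k * W k i = (Complex.normSq (W k i) : ℂ) := fun k _ => by
    rw [star_apply, Complex.star_def, mul_comm, Complex.mul_conj]
  rw [Finset.sum_congr rfl h2] at h
  exact_mod_cast h

lemma conj_entry (W : Matrix (Fin m) (Fin m) ℂ) (lam : Fin m → ℝ) (k l : Fin m) :
    (W * diagonal (Complex.ofReal ∘ lam) * star W) k l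
      = ∑ i, (lam i : ℂ) * (W k i * star (W l i)) := by
  rw [mul_apply]
  refine Finset.sum_congr rfl fun i _ => ?_
  rw [mul_diagonal, star_apply]
  simp only [Function.comp_apply]
  ring

lemma diag_entry (W : Matrix (Fin m) (Fin m) ℂ) (lam : Fin m → ℝ) (k : Fin m) :
    (W * diagonal (Complex.ofReal ∘ lam) * star W) k k = ((dvec W lam k : ℝ) : ℂ) := by
  rw [conj_entry, dvec]
  push_cast
  refine Finset.sum_congr rfl fun i _ => ?_
  rw [Complex.star_def, Complex.mul_conj]
  ring

lemma conj_diagonal {W : Matrix (Fin m) (Fin m) ℂ} (hW : W * star W = 1) {lam : Fin m → ℝ}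
    (h : ∀ k i j, W k i ≠ 0 → W k j ≠ 0 → lam i = lam j) :
    W * diagonal (Complex.ofReal ∘ lam) * star W = diagonal (Complex.ofReal ∘ dvec W lam) := by
  ext k l
  rw [conj_entry]
  have key : ∀ i ∈ Finset.univ, (lam i : ℂ) * (W k i * star (W l i))
      = (dvec W lam k : ℂ) * (W k i * star (W l i)) := by
    intro i _
    by_cases hi : W k i = 0
    · simp [hi]
    · have hli : lam i = dvec W lam k := by
        rw [dvec]
        have h3 : ∀ j ∈ Finset.univ, Complex.normSq (W k j) * lam j
            = Complex.normSq (W k j) * lam i := by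
          intro j _
          by_cases hj : W k j = 0
          · simp [hj]
          · rw [h k j i hj hi]
        rw [Finset.sum_congr rfl h3, ← Finset.sum_mul, row_sum hW k, one_mul]
      rw [← hli]
  rw [Finset.sum_congr rfl key, ← Finset.mul_sum]
  have h4 : ∑ i, W k i * star (W l i) = (W * star W) k l := by
    rw [mul_apply]
    exact Finset.sum_congr rfl fun i _ => by rw [star_apply]
  rw [h4, hW]
  by_cases hkl : k = l
  · subst hkl; simp
  · simp [one_apply_ne hkl, diagonal_apply_ne _ hkl]

lemma row_jensen_le {W : Matrix (Fin m) (Fin m) ℂ} (hW : W * star W = 1) {lam : Fin m → ℝ}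
    (hlam : ∀ i, 0 ≤ lam i) (k : Fin m) :
    dvec W lam k * Real.log (dvec W lam k)
      ≤ ∑ i, Complex.normSq (W k i) * (lam i * Real.log (lam i)) := by
  have h := Real.convexOn_mul_log.map_sum_le (t := Finset.univ)
    (w := fun i => Complex.normSq (W k i)) (p := lam)
    (fun i _ => Complex.normSq_nonneg _) (row_sum hW k) (fun i _ => hlam i)
  simpa [dvec, smul_eq_mul] using h

lemma sum_G {W : Matrix (Fin m) (Fin m) ℂ} (hW' : star W * W = 1) (g : Fin m → ℝ) :
    ∑ k, ∑ i, Complex.normSq (W k i) * g i = ∑ i, g i := by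
  rw [Finset.sum_comm]
  refine Finset.sum_congr rfl fun i _ => ?_
  rw [← Finset.sum_mul, col_sum hW' i, one_mul]

lemma peierls_le {W : Matrix (Fin m) (Fin m) ℂ} (hW : W ∈ Matrix.unitaryGroup (Fin m) ℂ)
    {lam : Fin m → ℝ} (hlam : ∀ i, 0 ≤ lam i) :
    ∑ k, dvec W lam k * Real.log (dvec W lam k) ≤ ∑ i, lam i * Real.log (lam i) :=
  calc ∑ k, dvec W lam k * Real.log (dvec W lam k)
      ≤ ∑ k, ∑ i, Complex.normSq (W k i) * (lam i * Real.log (lam i)) :=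
        Finset.sum_le_sum fun k _ => row_jensen_le (mem_unitaryGroup_iff.mp hW) hlam k
    _ = _ := sum_G (mem_unitaryGroup_iff'.mp hW) _

lemma row_jensen_lt {W : Matrix (Fin m) (Fin m) ℂ} (hW : W * star W = 1) {lam : Fin m → ℝ}
    (hlam : ∀ i, 0 ≤ lam i) {k i₀ j₀ : Fin m}
    (hi : W k i₀ ≠ 0) (hj : W k j₀ ≠ 0) (hne : lam i₀ ≠ lam j₀) :
    dvec W lam k * Real.log (dvec W lam k)
      < ∑ i, Complex.normSq (W k i) * (lam i * Real.log (lam i)) := by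
  classical
  set t := Finset.univ.filter (fun i => W k i ≠ 0) with ht
  have hext : ∀ g : Fin m → ℝ,
      ∑ i ∈ t, Complex.normSq (W k i) * g i = ∑ i, Complex.normSq (W k i) * g i := by
    intro g
    refine Finset.sum_subset (Finset.filter_subset _ _) fun x _ hx => ?_
    have hx0 : W k x = 0 := by simpa [ht] using hx
    simp [hx0]
  have hsum1 : ∑ i ∈ t, Complex.normSq (W k i) = 1 := by
    have h1 := hext (fun _ => 1)
    simp only [mul_one] at h1
    rw [h1, row_sum hW k]
  have hmemt : ∀ {i : Fin m}, W k i ≠ 0 → i ∈ t := fun h =>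
    Finset.mem_filter.mpr ⟨Finset.mem_univ _, h⟩
  have h := Real.strictConvexOn_mul_log.map_sum_lt (t := t)
      (w := fun i => Complex.normSq (W k i)) (p := lam)
      (fun i hi' => Complex.normSq_pos.mpr (by simpa [ht] using hi'))
      hsum1 (fun i _ => hlam i)
      ⟨i₀, hmemt hi, j₀, hmemt hj, hne⟩
  have e1 : ∑ i ∈ t, Complex.normSq (W k i) • lam i = dvec W lam k := by
    simpa [smul_eq_mul, dvec] using hext lam
  have e2 : ∑ i ∈ t, Complex.normSq (W k i) • (lam i * Real.log (lam i))
      = ∑ i, Complex.normSq (W k i) * (lam i * Real.log (lam i)) := by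
    simpa [smul_eq_mul] using hext (fun i => lam i * Real.log (lam i))
  rw [e1, e2] at h
  exact h

lemma peierls_lt {W : Matrix (Fin m) (Fin m) ℂ} (hW : W ∈ Matrix.unitaryGroup (Fin m) ℂ)
    {lam : Fin m → ℝ} (hlam : ∀ i, 0 ≤ lam i)
    (hstr : ∃ k i j, W k i ≠ 0 ∧ W k j ≠ 0 ∧ lam i ≠ lam j) :
    ∑ k, dvec W lam k * Real.log (dvec W lam k) < ∑ i, lam i * Real.log (lam i) := by
  obtain ⟨k₀, i₀, j₀, hi, hj, hne⟩ := hstr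
  calc ∑ k, dvec W lam k * Real.log (dvec W lam k)
      < ∑ k, ∑ i, Complex.normSq (W k i) * (lam i * Real.log (lam i)) :=
        Finset.sum_lt_sum (fun k _ => row_jensen_le (mem_unitaryGroup_iff.mp hW) hlam k)
          ⟨k₀, Finset.mem_univ _, row_jensen_lt (mem_unitaryGroup_iff.mp hW) hlam hi hj hne⟩
    _ = _ := sum_G (mem_unitaryGroup_iff'.mp hW) _

lemma posDef_smul {A : Matrix (Fin m) (Fin m) ℂ} (hA : A.PosDef) {a : ℝ} (ha : 0 < a) :
    (a • A).PosDef := by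
  have hsm : a • A = (a : ℂ) • A := by
    ext i j; simp [Matrix.smul_apply, Complex.real_smul]
  rw [hsm]
  constructor
  · show ((a : ℂ) • A)ᴴ = _
    rw [conjTranspose_smul, hA.1.eq]
    norm_num
  · intro x hx
    have ha' : (0 : ℂ) < (a : ℂ) := by exact_mod_cast ha
    refine lt_of_lt_of_eq (smul_pos ha' (hA.2 hx)) ?_
    simp only [smul_eq_mul, Finsupp.sum, Finset.mul_sum, Matrix.smul_apply]
    exact Finset.sum_congr rfl fun i _ => Finset.sum_congr rfl fun j _ => by ring

lemma traceRhoLogRho_eq {A : Matrix (Fin m) (Fin m) ℂ} (hA : A.IsHermitian) :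
    traceRhoLogRho A = ∑ i, hA.eigenvalues i * Real.log (hA.eigenvalues i) := by
  rw [traceRhoLogRho, dif_pos hA]
  set U : Matrix (Fin m) (Fin m) ℂ := (hA.eigenvectorUnitary : Matrix (Fin m) (Fin m) ℂ) with hU
  have h1 : star U * U = 1 := mem_unitaryGroup_iff'.mp hA.eigenvectorUnitary.2
  set D : Matrix (Fin m) (Fin m) ℂ := diagonal (RCLike.ofReal ∘ hA.eigenvalues) with hD
  set L : Matrix (Fin m) (Fin m) ℂ := diagonal (RCLike.ofReal ∘ Real.log ∘ hA.eigenvalues) with hL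
  have hsp : A = U * D * star U := hA.spectral_theorem
  have key : A * hA.cfc Real.log = U * (D * L) * star U := by
    show A * (U * L * star U) = U * (D * L) * star U
    rw [hsp]
    simp only [Matrix.mul_assoc]
    rw [show star U * (U * (L * star U)) = L * star U from by
      rw [← Matrix.mul_assoc, h1, Matrix.one_mul]]
  rw [key, Matrix.trace_mul_cycle, ← Matrix.mul_assoc, h1, Matrix.one_mul, hD, hL,
    diagonal_mul_diagonal, trace_diagonal]
  have h5 : ∀ i, ((RCLike.ofReal ∘ hA.eigenvalues) i * (RCLike.ofReal ∘ Real.log ∘ hA.eigenvalues) i : ℂ)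
      = ((hA.eigenvalues i * Real.log (hA.eigenvalues i) : ℝ) : ℂ) := by
    intro i; push_cast; rfl
  rw [Finset.sum_congr rfl fun i _ => h5 i, ← Complex.ofReal_sum, Complex.ofReal_re]

lemma conj_cancel {V M : Matrix (Fin m) (Fin m) ℂ} (hV : V ∈ Matrix.unitaryGroup (Fin m) ℂ) :
    V * (star V * M * V) * star V = M := by
  have h1 : V * star V = 1 := mem_unitaryGroup_iff.mp hV
  calc V * (star V * M * V) * star V
      = (V * star V) * M * (V * star V) := by simp only [Matrix.mul_assoc]
    _ = M := by rw [h1, Matrix.one_mul, Matrix.mul_one]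

end TraceEntropyAux

open TraceEntropyAux

/-- `ρ ↦ trace (ρ log ρ)` is strictly convex on the cone of Hermitian
positive definite `m×m` matrices. -/
theorem strictConvexOn_traceRhoLogRho {m : ℕ} :
    StrictConvexOn ℝ {ρ : Matrix (Fin m) (Fin m) ℂ | ρ.PosDef} (traceRhoLogRho (m := m)) := by
  classical
  constructor
  · intro x hx y hy a b ha hb hab
    simp only [Set.mem_setOf_eq] at *
    rcases ha.eq_or_lt with ha0 | ha0
    · have hb1 : b = 1 := by linarith
      rw [← ha0, hb1]; simpa using hy
    · rcases hb.eq_or_lt with hb0 | hb0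
      · have ha1 : a = 1 := by linarith
        rw [← hb0, ha1]; simpa using hx
      · exact (posDef_smul hx ha0).add (posDef_smul hy hb0)
  · intro A hA B hB hAB a b ha hb hab
    simp only [Set.mem_setOf_eq] at hA hB
    simp only [smul_eq_mul]
    set ρ : Matrix (Fin m) (Fin m) ℂ := a • A + b • B with hρdef
    have hρ : ρ.PosDef := (posDef_smul hA ha).add (posDef_smul hB hb)
    have hAH : A.IsHermitian := hA.1
    have hBH : B.IsHermitian := hB.1
    have hρH : ρ.IsHermitian := hρ.1
    set V : Matrix (Fin m) (Fin m) ℂ := (hρH.eigenvectorUnitary : Matrix (Fin m) (Fin m) ℂ)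
      with hVdef
    have hVmem : V ∈ Matrix.unitaryGroup (Fin m) ℂ := hρH.eigenvectorUnitary.2
    have hVV : star V * V = 1 := mem_unitaryGroup_iff'.mp hVmem
    set UA : Matrix (Fin m) (Fin m) ℂ := (hAH.eigenvectorUnitary : Matrix (Fin m) (Fin m) ℂ)
      with hUAdef
    set UB : Matrix (Fin m) (Fin m) ℂ := (hBH.eigenvectorUnitary : Matrix (Fin m) (Fin m) ℂ)
      with hUBdef
    set WA : Matrix (Fin m) (Fin m) ℂ := star V * UA with hWAdef
    set WB : Matrix (Fin m) (Fin m) ℂ := star V * UB with hWBdef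
    have hWAmem : WA ∈ Matrix.unitaryGroup (Fin m) ℂ :=
      mul_mem (Unitary.star_mem hVmem) hAH.eigenvectorUnitary.2
    have hWBmem : WB ∈ Matrix.unitaryGroup (Fin m) ℂ :=
      mul_mem (Unitary.star_mem hVmem) hBH.eigenvectorUnitary.2
    set lamA : Fin m → ℝ := hAH.eigenvalues with hlamAdef
    set lamB : Fin m → ℝ := hBH.eigenvalues with hlamBdef
    set μ : Fin m → ℝ := hρH.eigenvalues with hμdef
    have hlamA : ∀ i, 0 ≤ lamA i := fun i => (hA.eigenvalues_pos i).le
    have hlamB : ∀ i, 0 ≤ lamB i := fun i => (hB.eigenvalues_pos i).le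
    set α : Fin m → ℝ := dvec WA lamA with hαdef
    set β : Fin m → ℝ := dvec WB lamB with hβdef
    have hαnn : ∀ k, 0 ≤ α k := fun k =>
      Finset.sum_nonneg fun i _ => mul_nonneg (Complex.normSq_nonneg _) (hlamA i)
    have hβnn : ∀ k, 0 ≤ β k := fun k =>
      Finset.sum_nonneg fun i _ => mul_nonneg (Complex.normSq_nonneg _) (hlamB i)
    -- conjugated matrices
    have hconjA : star V * A * V = WA * diagonal (Complex.ofReal ∘ lamA) * star WA := by
      have hsp : A = UA * diagonal (Complex.ofReal ∘ lamA) * star UA := hAH.spectral_theorem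
      rw [hsp, hWAdef, Matrix.star_mul, star_star]
      simp only [Matrix.mul_assoc]
    have hconjB : star V * B * V = WB * diagonal (Complex.ofReal ∘ lamB) * star WB := by
      have hsp : B = UB * diagonal (Complex.ofReal ∘ lamB) * star UB := hBH.spectral_theorem
      rw [hsp, hWBdef, Matrix.star_mul, star_star]
      simp only [Matrix.mul_assoc]
    have hconjρ : star V * ρ * V = diagonal (Complex.ofReal ∘ μ) := by
      have hsp : ρ = V * diagonal (Complex.ofReal ∘ μ) * star V := hρH.spectral_theorem
      rw [hsp]
      simp only [Matrix.mul_assoc]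
      rw [show star V * (V * (diagonal (Complex.ofReal ∘ μ) * (star V * V)))
          = diagonal (Complex.ofReal ∘ μ) from by
        rw [hVV, Matrix.mul_one, ← Matrix.mul_assoc, hVV, Matrix.one_mul]]
    -- diagonal entries
    have hdiagA : ∀ k, (star V * A * V) k k = ((α k : ℝ) : ℂ) := fun k => by
      rw [hconjA]; exact diag_entry WA lamA k
    have hdiagB : ∀ k, (star V * B * V) k k = ((β k : ℝ) : ℂ) := fun k => by
      rw [hconjB]; exact diag_entry WB lamB k
    -- expansion of ρ conjugated
    have hexp : star V * ρ * V = a • (star V * A * V) + b • (star V * B * V) := by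
      rw [hρdef]
      rw [Matrix.mul_add, Matrix.add_mul, Matrix.mul_smul, Matrix.smul_mul,
        Matrix.mul_smul, Matrix.smul_mul]
    have hμeq : ∀ k, μ k = a * α k + b * β k := by
      intro k
      have h2 : (diagonal (Complex.ofReal ∘ μ)) k k
          = (a • (star V * A * V) + b • (star V * B * V)) k k := by
        rw [← hconjρ, hexp]
      rw [diagonal_apply_eq, Matrix.add_apply, Matrix.smul_apply, Matrix.smul_apply,
        hdiagA k, hdiagB k] at h2
      simp only [Function.comp_apply, Complex.real_smul] at h2
      exact_mod_cast h2
    -- Peierls bounds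
    have hPA : ∑ k, α k * Real.log (α k) ≤ traceRhoLogRho A := by
      rw [traceRhoLogRho_eq hAH]; exact peierls_le hWAmem hlamA
    have hPB : ∑ k, β k * Real.log (β k) ≤ traceRhoLogRho B := by
      rw [traceRhoLogRho_eq hBH]; exact peierls_le hWBmem hlamB
    rw [traceRhoLogRho_eq hρH]
    by_cases hcase : α = β
    · -- all conjugated diagonals agree; need strict Peierls for A or B
      have hcond : (∃ k i j, WA k i ≠ 0 ∧ WA k j ≠ 0 ∧ lamA i ≠ lamA j)
          ∨ (∃ k i j, WB k i ≠ 0 ∧ WB k j ≠ 0 ∧ lamB i ≠ lamB j) := by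
        by_contra hco
        push_neg at hco
        obtain ⟨h1, h2⟩ := hco
        have hDA : star V * A * V = diagonal (Complex.ofReal ∘ α) := by
          rw [hconjA]; exact conj_diagonal (mem_unitaryGroup_iff.mp hWAmem) h1
        have hDB : star V * B * V = diagonal (Complex.ofReal ∘ β) := by
          rw [hconjB]; exact conj_diagonal (mem_unitaryGroup_iff.mp hWBmem) h2
        have heq : star V * A * V = star V * B * V := by rw [hDA, hDB, hcase]
        have : A = B := by
          rw [← conj_cancel (M := A) hVmem, heq, conj_cancel hVmem]
        exact hAB this
      have step1 : ∑ k, μ k * Real.log (μ k)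
          ≤ a * (∑ k, α k * Real.log (α k)) + b * (∑ k, β k * Real.log (β k)) := by
        rw [Finset.mul_sum, Finset.mul_sum, ← Finset.sum_add_distrib]
        refine Finset.sum_le_sum fun k _ => ?_
        have h := Real.convexOn_mul_log.2 (Set.mem_Ici.mpr (hαnn k)) (Set.mem_Ici.mpr (hβnn k))
          ha.le hb.le hab
        simpa [smul_eq_mul, hμeq k] using h
      have step2 : a * (∑ k, α k * Real.log (α k)) + b * (∑ k, β k * Real.log (β k))
          < a * traceRhoLogRho A + b * traceRhoLogRho B := by
        rcases hcond with h | h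
        · have hlt : ∑ k, α k * Real.log (α k) < traceRhoLogRho A := by
            rw [traceRhoLogRho_eq hAH]; exact peierls_lt hWAmem hlamA h
          exact add_lt_add_of_lt_of_le (mul_lt_mul_of_pos_left hlt ha)
            (mul_le_mul_of_nonneg_left hPB hb.le)
        · have hlt : ∑ k, β k * Real.log (β k) < traceRhoLogRho B := by
            rw [traceRhoLogRho_eq hBH]; exact peierls_lt hWBmem hlamB h
          exact add_lt_add_of_le_of_lt (mul_le_mul_of_nonneg_left hPA ha.le)
            (mul_lt_mul_of_pos_left hlt hb)
      exact lt_of_le_of_lt step1 step2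
    · obtain ⟨k₀, hk₀⟩ := Function.ne_iff.mp hcase
      have step1 : ∑ k, μ k * Real.log (μ k)
          < a * (∑ k, α k * Real.log (α k)) + b * (∑ k, β k * Real.log (β k)) := by
        rw [Finset.mul_sum, Finset.mul_sum, ← Finset.sum_add_distrib]
        refine Finset.sum_lt_sum (fun k _ => ?_) ⟨k₀, Finset.mem_univ _, ?_⟩
        · have h := Real.convexOn_mul_log.2 (Set.mem_Ici.mpr (hαnn k)) (Set.mem_Ici.mpr (hβnn k))
            ha.le hb.le hab
          simpa [smul_eq_mul, hμeq k] using h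
        · have h := Real.strictConvexOn_mul_log.2 (Set.mem_Ici.mpr (hαnn k₀))
            (Set.mem_Ici.mpr (hβnn k₀)) hk₀ ha hb hab
          simpa [smul_eq_mul, hμeq k₀] using h
      have step2 : a * (∑ k, α k * Real.log (α k)) + b * (∑ k, β k * Real.log (β k))
          ≤ a * traceRhoLogRho A + b * traceRhoLogRho B :=
        add_le_add (mul_le_mul_of_nonneg_left hPA ha.le) (mul_le_mul_of_nonneg_left hPB hb.le)
      exact lt_of_lt_of_le step1 step2
end

section
/- Suppose ρ̂ ≻ 0 satisfies L(ρ̂) = R and ρ̂ = (L*(λ))⁻¹ for some λ with L*(λ) ≻ 0. Then ρ̂ is the unique minimizer of ρ ↦ −trace(log ρ) over all Hermitian positive definite ρ with L(ρ) = R. -/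
open scoped ComplexOrder
open Matrix

/-- `ρ ↦ −trace (log ρ)` (via the spectral matrix logarithm), extended by junk
off the Hermitian matrices. -/
noncomputable def negTraceLog {m : ℕ} (ρ : Matrix (Fin m) (Fin m) ℂ) : ℝ :=
  if h : ρ.IsHermitian then -(((h.cfc Real.log).trace).re) else 0

/- ### Auxiliary lemmas -/

lemma aux_trace_cfc {m : ℕ} {A : Matrix (Fin m) (Fin m) ℂ} (hA : A.IsHermitian) (f : ℝ → ℝ) :
    (hA.cfc f).trace = ((∑ i, f (hA.eigenvalues i) : ℝ) : ℂ) := by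
  rw [Matrix.IsHermitian.cfc, Unitary.conjStarAlgAut_apply, trace_mul_cycle,
    (Matrix.mem_unitaryGroup_iff').mp (Matrix.IsHermitian.eigenvectorUnitary hA).2, one_mul,
    trace_diagonal]
  push_cast
  rfl

lemma aux_trace_eigen {m : ℕ} {A : Matrix (Fin m) (Fin m) ℂ} (hA : A.IsHermitian) :
    A.trace = ((∑ i, hA.eigenvalues i : ℝ) : ℂ) := by
  conv_lhs => rw [hA.spectral_theorem]
  rw [Unitary.conjStarAlgAut_apply, trace_mul_cycle, (Matrix.mem_unitaryGroup_iff').mp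
    (Matrix.IsHermitian.eigenvectorUnitary hA).2, one_mul, trace_diagonal]
  push_cast
  rfl

lemma aux_det_ofReal {m : ℕ} {A : Matrix (Fin m) (Fin m) ℂ} (hA : A.IsHermitian) :
    A.det = ((∏ i, hA.eigenvalues i : ℝ) : ℂ) := by
  rw [hA.det_eq_prod_eigenvalues]; push_cast; rfl

lemma aux_det_re_pos {m : ℕ} {A : Matrix (Fin m) (Fin m) ℂ} (hA : A.PosDef) :
    0 < A.det.re := by
  rw [aux_det_ofReal hA.1, Complex.ofReal_re]
  exact Finset.prod_pos fun i _ => hA.eigenvalues_pos i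

lemma aux_det_eq_re {m : ℕ} {A : Matrix (Fin m) (Fin m) ℂ} (hA : A.PosDef) :
    A.det = ((A.det.re : ℝ) : ℂ) := by
  rw [aux_det_ofReal hA.1, Complex.ofReal_re]

lemma aux_negTraceLog_eq {m : ℕ} {A : Matrix (Fin m) (Fin m) ℂ} (hA : A.PosDef) :
    negTraceLog A = - Real.log A.det.re := by
  rw [negTraceLog, dif_pos hA.1, aux_trace_cfc hA.1, aux_det_ofReal hA.1]
  simp only [Complex.ofReal_re]
  rw [Real.log_prod (fun i _ => (hA.eigenvalues_pos i).ne')]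

/-- Klein-type inequality: `log det C < trace C − m` unless `C = 1`. -/
lemma aux_klein {m : ℕ} {C : Matrix (Fin m) (Fin m) ℂ} (hC : C.PosDef) (hne : C ≠ 1) :
    Real.log C.det.re < C.trace.re - m := by
  have hμ := hC.eigenvalues_pos
  rw [aux_det_ofReal hC.1, aux_trace_eigen hC.1]
  simp only [Complex.ofReal_re]
  rw [Real.log_prod (fun i _ => (hμ i).ne')]
  have hex : ∃ i, hC.1.eigenvalues i ≠ 1 := by
    by_contra h
    push_neg at h
    apply hne
    have hdiag : Matrix.diagonal (RCLike.ofReal ∘ hC.1.eigenvalues)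
        = (1 : Matrix (Fin m) (Fin m) ℂ) := by
      rw [show (RCLike.ofReal ∘ hC.1.eigenvalues : Fin m → ℂ) = fun _ => 1 by
        funext i; simp [h i]]
      exact Matrix.diagonal_one
    conv_lhs => rw [hC.1.spectral_theorem]
    rw [Unitary.conjStarAlgAut_apply, hdiag, mul_one,
      (Matrix.mem_unitaryGroup_iff).mp (Matrix.IsHermitian.eigenvectorUnitary hC.1).2]
  obtain ⟨i, hi⟩ := hex
  have hlt := Finset.sum_lt_sum (s := Finset.univ)
    (f := fun i => Real.log (hC.1.eigenvalues i)) (g := fun i => hC.1.eigenvalues i - 1)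
    (fun j _ => Real.log_le_sub_one_of_pos (hμ j))
    ⟨i, Finset.mem_univ i, Real.log_lt_sub_one_of_pos (hμ i) hi⟩
  calc ∑ j, Real.log (hC.1.eigenvalues j) < ∑ j, (hC.1.eigenvalues j - 1) := hlt
    _ = (∑ j, hC.1.eigenvalues j) - m := by rw [Finset.sum_sub_distrib]; simp

/-- The trace pairing of `L*(λ)` against a Hermitian `ρ` only depends on `L ρ`. -/
lemma aux_trace_lstar_mul {N p q m : ℕ} (Gl : Fin N → Matrix (Fin p) (Fin m) ℂ)
    (Gr : Fin N → Matrix (Fin m) (Fin q) ℂ) (lam : Matrix (Fin p) (Fin q) ℂ)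
    {ρ : Matrix (Fin m) (Fin m) ℂ} (hρ : ρ.IsHermitian) :
    (Lstar Gl Gr lam * ρ).trace = (((lam * (Lmap Gl Gr ρ)ᴴ).trace.re : ℝ) : ℂ) := by
  set M : Matrix (Fin m) (Fin m) ℂ := ∑ k, (Gl k)ᴴ * lam * (Gr k)ᴴ with hM
  have h1 : (M * ρ).trace = (lam * (Lmap Gl Gr ρ)ᴴ).trace := by
    rw [hM, Lmap, Finset.sum_mul, trace_sum, conjTranspose_sum, Matrix.mul_sum, trace_sum]
    refine Finset.sum_congr rfl fun k _ => ?_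
    rw [conjTranspose_mul, conjTranspose_mul, hρ.eq]
    rw [show (Gl k)ᴴ * lam * (Gr k)ᴴ * ρ = ((Gl k)ᴴ) * (lam * ((Gr k)ᴴ * ρ)) by
      simp only [Matrix.mul_assoc]]
    rw [trace_mul_comm]
    simp only [Matrix.mul_assoc]
  have h2 : (Mᴴ * ρ).trace = star ((M * ρ).trace) := by
    have : Mᴴ * ρ = (ρ * M)ᴴ := by rw [conjTranspose_mul, hρ.eq]
    rw [this, trace_conjTranspose, trace_mul_comm]
  rw [Lstar, ← hM, smul_mul_assoc, trace_smul, add_mul, trace_add, h2, h1]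
  set z := (lam * (Lmap Gl Gr ρ)ᴴ).trace
  rw [show star z = (starRingEnd ℂ) z from rfl, Complex.add_conj, smul_eq_mul]
  push_cast
  ring

/-- Conjugation of a positive definite matrix by an invertible Hermitian matrix. -/
lemma aux_posdef_conj {m : ℕ} {B ρ : Matrix (Fin m) (Fin m) ℂ} (hρ : ρ.PosDef)
    (hB : B.IsHermitian) (hBdet : IsUnit B.det) : (B * ρ * B).PosDef := by
  refine Matrix.PosDef.of_dotProduct_mulVec_pos ?_ ?_
  · rw [show B * ρ * B = Bᴴ * ρ * B by rw [hB.eq]]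
    exact Matrix.isHermitian_conjTranspose_mul_mul B hρ.1
  · intro x hx
    have hy : B *ᵥ x ≠ 0 := by
      intro h
      exact hx (by
        have := Matrix.mulVec_injective_iff_isUnit.mpr (isUnit_iff_isUnit_det _ |>.2 hBdet)
        exact this (by simpa using h))
    have key : star x ⬝ᵥ (B * ρ * B) *ᵥ x = star (B *ᵥ x) ⬝ᵥ ρ *ᵥ (B *ᵥ x) := by
      rw [star_mulVec, hB.eq]
      rw [show (B * ρ * B) *ᵥ x = B *ᵥ (ρ *ᵥ (B *ᵥ x)) by simp [mulVec_mulVec, Matrix.mul_assoc]]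
      rw [dotProduct_mulVec]
    rw [key]
    exact hρ.dotProduct_mulVec_pos hy

/-- if `ρ̂ ≻ 0` satisfies `L ρ̂ = R` and `ρ̂ = (L*(λ))⁻¹` for some `λ` with
`L*(λ) ≻ 0`, then `ρ̂` is the unique minimizer of `ρ ↦ −trace (log ρ)` over Hermitian
positive definite `ρ` with `L ρ = R`. -/
theorem unique_minimizer_negTraceLog {N p q m : ℕ}
    (Gl : Fin N → Matrix (Fin p) (Fin m) ℂ) (Gr : Fin N → Matrix (Fin m) (Fin q) ℂ)
    (R : Matrix (Fin p) (Fin q) ℂ) (ρhat : Matrix (Fin m) (Fin m) ℂ)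
    (hρhat : ρhat.PosDef) (hmatch : Lmap Gl Gr ρhat = R)
    (lam : Matrix (Fin p) (Fin q) ℂ) (hlam : (Lstar Gl Gr lam).PosDef)
    (hform : ρhat = (Lstar Gl Gr lam)⁻¹) :
    ∀ ρ : Matrix (Fin m) (Fin m) ℂ, ρ.PosDef → Lmap Gl Gr ρ = R → ρ ≠ ρhat →
      negTraceLog ρhat < negTraceLog ρ := by
  intro ρ hρ hmatchρ hne
  set S := (open MatrixOrder in CFC.sqrt ρhat) with hSdef
  have hSps : S.PosSemidef := (open MatrixOrder in Matrix.nonneg_iff_posSemidef.mp (CFC.sqrt_nonneg ρhat))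
  have hSH : S.IsHermitian := hSps.1
  have hSS : S * S = ρhat := (open MatrixOrder in CFC.sqrt_mul_sqrt_self ρhat (Matrix.nonneg_iff_posSemidef.mpr hρhat.posSemidef))
  have hdetA_ne : ρhat.det ≠ 0 := by
    rw [aux_det_eq_re hρhat]
    exact_mod_cast (aux_det_re_pos hρhat).ne'
  have hSdet : S.det ≠ 0 := by
    intro h
    apply hdetA_ne
    rw [← hSS, det_mul, h, mul_zero]
  have hSdetU : IsUnit S.det := isUnit_iff_ne_zero.mpr hSdet
  have hSinvH : S⁻¹.IsHermitian := hSH.inv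
  set C := S⁻¹ * ρ * S⁻¹ with hCdef
  have hC : C.PosDef := aux_posdef_conj hρ hSinvH (isUnit_nonsing_inv_det _ hSdetU)
  have hSinvS : S⁻¹ * S = 1 := nonsing_inv_mul S hSdetU
  have hSSinv : S * S⁻¹ = 1 := mul_nonsing_inv S hSdetU
  have hρeq : S * C * S = ρ := by
    rw [hCdef]
    rw [show S * (S⁻¹ * ρ * S⁻¹) * S = (S * S⁻¹) * ρ * (S⁻¹ * S) by
      simp only [Matrix.mul_assoc]]
    rw [hSSinv, hSinvS, one_mul, mul_one]
  have hCne : C ≠ 1 := by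
    intro h
    apply hne
    rw [← hρeq, h, mul_one, hSS]
  -- determinants
  have hdetSinvS : S⁻¹.det * S.det = 1 := by
    rw [← det_mul, hSinvS, det_one]
  have hdetC_mul : C.det * ρhat.det = ρ.det := by
    have h1 : C.det = S⁻¹.det * ρ.det * S⁻¹.det := by rw [hCdef, det_mul, det_mul]
    have h2 : ρhat.det = S.det * S.det := by rw [← hSS, det_mul]
    calc C.det * ρhat.det = (S⁻¹.det * S.det) * (S⁻¹.det * S.det) * ρ.det := by
          rw [h1, h2]; ring
      _ = ρ.det := by rw [hdetSinvS]; ring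
  -- traces
  have hSinvSinv : S⁻¹ * S⁻¹ = ρhat⁻¹ := by rw [← hSS, Matrix.mul_inv_rev]
  have htrC : C.trace = (ρhat⁻¹ * ρ).trace := by
    rw [hCdef, trace_mul_cycle, hSinvSinv]
  have hLsdetU : IsUnit (Lstar Gl Gr lam).det := isUnit_iff_ne_zero.mpr (by
    intro h
    have := aux_det_re_pos hlam
    rw [h] at this
    simp at this)
  have hAinv : ρhat⁻¹ = Lstar Gl Gr lam := by
    rw [hform, Matrix.nonsing_inv_nonsing_inv _ hLsdetU]
  have htr1 : (ρhat⁻¹ * ρ).trace = (ρhat⁻¹ * ρhat).trace := by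
    rw [hAinv, aux_trace_lstar_mul Gl Gr lam hρ.1, aux_trace_lstar_mul Gl Gr lam hρhat.1,
      hmatchρ, hmatch]
  have htr2 : (ρhat⁻¹ * ρhat).trace = (m : ℂ) := by
    rw [nonsing_inv_mul ρhat (isUnit_iff_ne_zero.mpr hdetA_ne), trace_one]
    simp
  have htrCre : C.trace.re = (m : ℝ) := by
    rw [htrC, htr1, htr2]
    simp
  -- Klein inequality
  have hK := aux_klein hC hCne
  rw [htrCre, sub_self] at hK
  -- split log of determinant
  have hre : C.det.re * ρhat.det.re = ρ.det.re := by
    have := hdetC_mul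
    rw [aux_det_eq_re hC, aux_det_eq_re hρhat, aux_det_eq_re hρ, ← Complex.ofReal_mul] at this
    exact_mod_cast this
  have hlog : Real.log C.det.re + Real.log ρhat.det.re = Real.log ρ.det.re := by
    rw [← hre, Real.log_mul (aux_det_re_pos hC).ne' (aux_det_re_pos hρhat).ne']
  rw [aux_negTraceLog_eq hρhat, aux_negTraceLog_eq hρ]
  linarith
end

section
/- Suppose ρ̂ = (1/e) exp(−L*(λ)) for some λ ∈ ℂ^{p×q}, and L(ρ̂) = R. Then ρ̂ is the unique minimizer of ρ ↦ trace(ρ log ρ) over all Hermitian positive definite ρ with L(ρ) = R. -/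
open scoped ComplexOrder
open Matrix

open NormedSpace

variable {m : ℕ}

-- scalar Klein inequality
lemma scalar_klein {x y : ℝ} (hx : 0 < x) (hy : 0 < y) (hne : x ≠ y) :
    0 < x * Real.log x - x * Real.log y - x + y := by
  have hdiv : (0:ℝ) < y / x := div_pos hy hx
  have hne1 : y / x ≠ 1 := by
    intro h; exact hne ((div_eq_one_iff_eq hx.ne').mp h).symm
  have h := Real.log_lt_sub_one_of_pos hdiv hne1
  rw [Real.log_div hy.ne' hx.ne'] at h
  have h2 := (mul_lt_mul_iff_right₀ hx).mpr h
  have h3 : x * (y / x - 1) = y - x := by field_simp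
  nlinarith

-- PosDef is preserved by unitary conjugation
lemma posdef_unitary_conj {D : Matrix (Fin m) (Fin m) ℂ} (hD : D.PosDef)
    (U : Matrix.unitaryGroup (Fin m) ℂ) :
    ((U : Matrix (Fin m) (Fin m) ℂ) * D * star (U : Matrix (Fin m) (Fin m) ℂ)).PosDef := by
  set Um : Matrix (Fin m) (Fin m) ℂ := (U : Matrix (Fin m) (Fin m) ℂ)
  have hUU : Um * star Um = 1 := (Matrix.mem_unitaryGroup_iff).mp U.2
  refine Matrix.PosDef.of_dotProduct_mulVec_pos ?_ ?_
  · have : (Um * D * star Um)ᴴ = Um * Dᴴ * star Um := by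
      simp [Matrix.star_eq_conjTranspose, Matrix.conjTranspose_mul, mul_assoc]
    rw [Matrix.IsHermitian, this, hD.1.eq]
  · intro x hx
    have hy : Um *ᵥ (star Um *ᵥ x) = x := by
      rw [Matrix.mulVec_mulVec, hUU, Matrix.one_mulVec]
    have hyne : star Um *ᵥ x ≠ 0 := by
      intro h; apply hx; rw [← hy, h, Matrix.mulVec_zero]
    have key : star x ⬝ᵥ ((Um * D * star Um) *ᵥ x)
        = star (star Um *ᵥ x) ⬝ᵥ (D *ᵥ (star Um *ᵥ x)) := by
      rw [← Matrix.mulVec_mulVec, ← Matrix.mulVec_mulVec, Matrix.dotProduct_mulVec (star x) Um,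
        Matrix.star_mulVec, Matrix.star_eq_conjTranspose, Matrix.conjTranspose_conjTranspose]
    rw [key]
    exact hD.dotProduct_mulVec_pos hyne

lemma trace_unitary_conj (U : Matrix.unitaryGroup (Fin m) ℂ) (M : Matrix (Fin m) (Fin m) ℂ) :
    ((U : Matrix (Fin m) (Fin m) ℂ) * M * star (U : Matrix (Fin m) (Fin m) ℂ)).trace = M.trace := by
  rw [Matrix.trace_mul_cycle, mul_assoc, ← mul_assoc (star _), (Matrix.mem_unitaryGroup_iff').mp U.2, one_mul]

-- trace of (U Dα Uᴴ) * (V Df Vᴴ) in coordinates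
lemma trace_conj_mul_conj (U V : Matrix.unitaryGroup (Fin m) ℂ) (a f : Fin m → ℝ) :
    (((U : Matrix (Fin m) (Fin m) ℂ) * Matrix.diagonal (fun i => (a i : ℂ)) * star (U : Matrix (Fin m) (Fin m) ℂ))
      * ((V : Matrix (Fin m) (Fin m) ℂ) * Matrix.diagonal (fun i => (f i : ℂ)) * star (V : Matrix (Fin m) (Fin m) ℂ))).trace
    = ∑ i, ∑ j, ((a i * f j * Complex.normSq ((star (U : Matrix (Fin m) (Fin m) ℂ) * (V : Matrix (Fin m) (Fin m) ℂ)) i j) : ℝ) : ℂ) := by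
  set Um : Matrix (Fin m) (Fin m) ℂ := (U : Matrix (Fin m) (Fin m) ℂ)
  set Vm : Matrix (Fin m) (Fin m) ℂ := (V : Matrix (Fin m) (Fin m) ℂ)
  set W : Matrix (Fin m) (Fin m) ℂ := star Um * Vm with hW
  have hUU : Um * star Um = 1 := (Matrix.mem_unitaryGroup_iff).mp U.2
  have key : (Um * Matrix.diagonal (fun i => (a i : ℂ)) * star Um)
      * (Vm * Matrix.diagonal (fun i => (f i : ℂ)) * star Vm)
      = Um * (Matrix.diagonal (fun i => (a i : ℂ)) * W * Matrix.diagonal (fun i => (f i : ℂ)) * star W) * star Um := by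
    have hsW : star W = star Vm * Um := by
      rw [hW, StarMul.star_mul, star_star]
    rw [hsW, hW]
    simp only [mul_assoc]
    rw [hUU]
    simp [mul_assoc]
  rw [key, trace_unitary_conj]
  rw [Matrix.trace]
  simp only [Matrix.diag_apply]
  congr 1; ext i
  rw [Matrix.mul_apply]
  congr 1; ext j
  rw [Matrix.mul_diagonal, Matrix.diagonal_mul, Matrix.star_apply,
    Complex.star_def, Complex.ofReal_mul, Complex.ofReal_mul, ← Complex.mul_conj]
  ring

lemma trace_mul_cfc_self (X : Matrix (Fin m) (Fin m) ℂ) (hX : X.IsHermitian) (f : ℝ → ℝ) :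
    (X * hX.cfc f).trace = ∑ i, ((hX.eigenvalues i * f (hX.eigenvalues i) : ℝ) : ℂ) := by
  set Um : Matrix (Fin m) (Fin m) ℂ := (hX.eigenvectorUnitary : Matrix (Fin m) (Fin m) ℂ) with hUm
  have hUU : star Um * Um = 1 := (Matrix.mem_unitaryGroup_iff').mp hX.eigenvectorUnitary.2
  have heq : X * hX.cfc f = (Um * Matrix.diagonal (RCLike.ofReal ∘ hX.eigenvalues) * star Um)
      * (Um * Matrix.diagonal (RCLike.ofReal ∘ f ∘ hX.eigenvalues) * star Um) := by
    rw [Matrix.IsHermitian.cfc]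
    exact congrArg (fun z => z * (Um * Matrix.diagonal (RCLike.ofReal ∘ f ∘ hX.eigenvalues) * star Um)) hX.spectral_theorem
  rw [heq]
  have key : (Um * Matrix.diagonal (RCLike.ofReal ∘ hX.eigenvalues) * star Um)
      * (Um * Matrix.diagonal (RCLike.ofReal ∘ f ∘ hX.eigenvalues) * star Um)
      = Um * (Matrix.diagonal (RCLike.ofReal ∘ hX.eigenvalues) * Matrix.diagonal (RCLike.ofReal ∘ f ∘ hX.eigenvalues)) * star Um := by
    simp only [mul_assoc]
    rw [← mul_assoc (star Um) Um, hUU, one_mul]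
  rw [key, trace_unitary_conj hX.eigenvectorUnitary, Matrix.diagonal_mul_diagonal,
    Matrix.trace_diagonal]
  congr 1; ext i
  simp [Complex.ofReal_mul]

lemma klein_core (U V : Matrix.unitaryGroup (Fin m) ℂ) (α β : Fin m → ℝ)
    (hαpos : ∀ i, 0 < α i) (hβpos : ∀ j, 0 < β j)
    (hne : (U : Matrix (Fin m) (Fin m) ℂ) * Matrix.diagonal (fun i => (α i : ℂ)) * star (U : Matrix (Fin m) (Fin m) ℂ)
        ≠ (V : Matrix (Fin m) (Fin m) ℂ) * Matrix.diagonal (fun i => (β i : ℂ)) * star (V : Matrix (Fin m) (Fin m) ℂ)) :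
    (∑ i, ∑ j, α i * Real.log (β j) * Complex.normSq ((star (U : Matrix (Fin m) (Fin m) ℂ) * (V : Matrix (Fin m) (Fin m) ℂ)) i j))
      + (∑ i, α i) - (∑ j, β j) < ∑ i, α i * Real.log (α i) := by
  set Um : Matrix (Fin m) (Fin m) ℂ := (U : Matrix (Fin m) (Fin m) ℂ) with hUm
  set Vm : Matrix (Fin m) (Fin m) ℂ := (V : Matrix (Fin m) (Fin m) ℂ) with hVm
  set W : Matrix (Fin m) (Fin m) ℂ := star Um * Vm with hWdef
  set c : Fin m → Fin m → ℝ := fun i j => Complex.normSq (W i j) with hc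
  have hUU : Um * star Um = 1 := (Matrix.mem_unitaryGroup_iff).mp U.2
  have hUU' : star Um * Um = 1 := (Matrix.mem_unitaryGroup_iff').mp U.2
  have hVV : Vm * star Vm = 1 := (Matrix.mem_unitaryGroup_iff).mp V.2
  have hVV' : star Vm * Vm = 1 := (Matrix.mem_unitaryGroup_iff').mp V.2
  have hWW : W * star W = 1 := by
    rw [hWdef, StarMul.star_mul, star_star, mul_assoc, ← mul_assoc Vm, hVV, one_mul, hUU']
  have hWW' : star W * W = 1 := by
    rw [hWdef, StarMul.star_mul, star_star, mul_assoc, ← mul_assoc Um, hUU, one_mul, hVV']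
  have hrow : ∀ i, ∑ j, c i j = 1 := by
    intro i
    have h1 : (W * star W) i i = 1 := by rw [hWW]; simp
    rw [Matrix.mul_apply] at h1
    have h2 : ∀ j, W i j * (star W) j i = ((c i j : ℝ) : ℂ) := by
      intro j
      rw [Matrix.star_apply, Complex.star_def, Complex.mul_conj]
    rw [Finset.sum_congr rfl (fun j _ => h2 j)] at h1
    have := congrArg Complex.re h1
    rwa [Complex.re_sum] at this
  have hcol : ∀ j, ∑ i, c i j = 1 := by
    intro j
    have h1 : (star W * W) j j = 1 := by rw [hWW']; simp
    rw [Matrix.mul_apply] at h1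
    have h2 : ∀ i, (star W) j i * W i j = ((c i j : ℝ) : ℂ) := by
      intro i
      rw [Matrix.star_apply, Complex.star_def, mul_comm, Complex.mul_conj]
    rw [Finset.sum_congr rfl (fun i _ => h2 i)] at h1
    have := congrArg Complex.re h1
    rwa [Complex.re_sum] at this
  have hcnn : ∀ i j, 0 ≤ c i j := fun i j => Complex.normSq_nonneg _
  -- the termwise Klein quantity
  set t : Fin m → Fin m → ℝ := fun i j =>
    c i j * (α i * Real.log (α i) - α i * Real.log (β j) - α i + β j) with ht
  have htnn : ∀ i j, 0 ≤ t i j := by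
    intro i j
    apply mul_nonneg (hcnn i j)
    rcases eq_or_ne (α i) (β j) with h | h
    · rw [h]; simp
    · exact (scalar_klein (hαpos i) (hβpos j) h).le
  -- not all terms vanish
  have hex : ¬ (∀ i j, t i j = 0) := by
    intro hall
    apply hne
    have hWD : W * Matrix.diagonal (fun j => (β j : ℂ)) = Matrix.diagonal (fun i => (α i : ℂ)) * W := by
      ext i j
      rw [Matrix.mul_diagonal, Matrix.diagonal_mul]
      rcases mul_eq_zero.mp (hall i j) with h | h
      · have hW0 : W i j = 0 := by
          have := Complex.normSq_eq_zero.mp h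
          exact this
        rw [hW0]; ring
      · have hab : α i = β j := by
          by_contra hne'
          exact (scalar_klein (hαpos i) (hβpos j) hne').ne' h
        rw [hab]; ring
    have hV : Vm = Um * W := by
      rw [hWdef, ← mul_assoc, hUU, one_mul]
    have h1 : Vm * Matrix.diagonal (fun j => (β j : ℂ)) * star Vm
        = Um * (W * Matrix.diagonal (fun j => (β j : ℂ)) * star W) * star Um := by
      rw [hV, StarMul.star_mul]
      simp only [mul_assoc]
    rw [h1, hWD, mul_assoc (Matrix.diagonal fun i => (α i : ℂ)) W (star W), hWW, mul_one]
  push_neg at hex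
  obtain ⟨i₀, j₀, hij⟩ := hex
  have hpos : 0 < ∑ i, ∑ j, t i j := by
    have h1 : 0 < t i₀ j₀ := lt_of_le_of_ne (htnn i₀ j₀) (Ne.symm hij)
    have h2 : t i₀ j₀ ≤ ∑ j, t i₀ j :=
      Finset.single_le_sum (fun j _ => htnn i₀ j) (Finset.mem_univ j₀)
    have h3 : ∑ j, t i₀ j ≤ ∑ i, ∑ j, t i j :=
      Finset.single_le_sum (fun i _ => Finset.sum_nonneg (fun j _ => htnn i j))
        (Finset.mem_univ i₀)
    linarith
  -- expand t and rearrange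
  have hsplit : ∑ i, ∑ j, t i j
      = (∑ i, ∑ j, c i j * (α i * Real.log (α i)))
        - (∑ i, ∑ j, α i * Real.log (β j) * c i j)
        - (∑ i, ∑ j, c i j * α i) + (∑ i, ∑ j, c i j * β j) := by
    have h : ∀ i j, t i j = c i j * (α i * Real.log (α i)) - α i * Real.log (β j) * c i j
        - c i j * α i + c i j * β j := by
      intro i j; simp only [ht]; ring
    simp only [h, Finset.sum_sub_distrib, Finset.sum_add_distrib]
  have e1 : ∑ i, ∑ j, c i j * (α i * Real.log (α i)) = ∑ i, α i * Real.log (α i) := by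
    refine Finset.sum_congr rfl (fun i _ => ?_)
    rw [← Finset.sum_mul, hrow i, one_mul]
  have e2 : ∑ i, ∑ j, c i j * α i = ∑ i, α i := by
    refine Finset.sum_congr rfl (fun i _ => ?_)
    rw [← Finset.sum_mul, hrow i, one_mul]
  have e3 : ∑ i, ∑ j, c i j * β j = ∑ j, β j := by
    rw [Finset.sum_comm]
    refine Finset.sum_congr rfl (fun j _ => ?_)
    rw [← Finset.sum_mul, hcol j, one_mul]
  rw [hsplit, e1, e2, e3] at hpos
  simp only [hc] at hpos ⊢
  linarith

example (f : Fin m → ℝ) : (RCLike.ofReal ∘ f : Fin m → ℂ) = fun i => ((f i : ℝ) : ℂ) := rfl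

lemma trace_unitary_conj_diag (U : Matrix.unitaryGroup (Fin m) ℂ) (d : Fin m → ℝ) :
    ((U : Matrix (Fin m) (Fin m) ℂ) * Matrix.diagonal (fun i => (d i : ℂ))
      * star (U : Matrix (Fin m) (Fin m) ℂ)).trace = ∑ i, ((d i : ℝ) : ℂ) := by
  rw [trace_unitary_conj, Matrix.trace_diagonal]

lemma klein_matrix {A B : Matrix (Fin m) (Fin m) ℂ} (hA : A.PosDef) (hB : B.PosDef)
    (hne : A ≠ B) :
    ((A * hB.1.cfc Real.log).trace).re + (A.trace).re - (B.trace).re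
      < ((A * hA.1.cfc Real.log).trace).re := by
  have hα := fun i => hA.eigenvalues_pos i
  have hβ := fun j => hB.eigenvalues_pos j
  have eqUA : A = (hA.1.eigenvectorUnitary : Matrix (Fin m) (Fin m) ℂ)
      * Matrix.diagonal (fun i => ((hA.1.eigenvalues i : ℝ) : ℂ))
      * star (hA.1.eigenvectorUnitary : Matrix (Fin m) (Fin m) ℂ) := hA.1.spectral_theorem
  have eqVB : B = (hB.1.eigenvectorUnitary : Matrix (Fin m) (Fin m) ℂ)
      * Matrix.diagonal (fun i => ((hB.1.eigenvalues i : ℝ) : ℂ))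
      * star (hB.1.eigenvectorUnitary : Matrix (Fin m) (Fin m) ℂ) := hB.1.spectral_theorem
  have hcfcB : hB.1.cfc Real.log = (hB.1.eigenvectorUnitary : Matrix (Fin m) (Fin m) ℂ)
      * Matrix.diagonal (fun i => ((Real.log (hB.1.eigenvalues i) : ℝ) : ℂ))
      * star (hB.1.eigenvectorUnitary : Matrix (Fin m) (Fin m) ℂ) := rfl
  have hne' : (hA.1.eigenvectorUnitary : Matrix (Fin m) (Fin m) ℂ)
      * Matrix.diagonal (fun i => ((hA.1.eigenvalues i : ℝ) : ℂ))
      * star (hA.1.eigenvectorUnitary : Matrix (Fin m) (Fin m) ℂ)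
      ≠ (hB.1.eigenvectorUnitary : Matrix (Fin m) (Fin m) ℂ)
      * Matrix.diagonal (fun i => ((hB.1.eigenvalues i : ℝ) : ℂ))
      * star (hB.1.eigenvectorUnitary : Matrix (Fin m) (Fin m) ℂ) := by
    intro h; exact hne (by rw [eqUA, eqVB, h])
  have hcore := klein_core hA.1.eigenvectorUnitary hB.1.eigenvectorUnitary
    hA.1.eigenvalues hB.1.eigenvalues hα hβ hne'
  -- rewrite each trace
  have h1 : ((A * hA.1.cfc Real.log).trace).re
      = ∑ i, hA.1.eigenvalues i * Real.log (hA.1.eigenvalues i) := by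
    rw [trace_mul_cfc_self A hA.1 Real.log, Complex.re_sum]
    simp
  have h2 : ((A * hB.1.cfc Real.log).trace).re
      = ∑ i, ∑ j, hA.1.eigenvalues i * Real.log (hB.1.eigenvalues j)
          * Complex.normSq ((star (hA.1.eigenvectorUnitary : Matrix (Fin m) (Fin m) ℂ)
            * (hB.1.eigenvectorUnitary : Matrix (Fin m) (Fin m) ℂ)) i j) := by
    have heq : A * hB.1.cfc Real.log
        = ((hA.1.eigenvectorUnitary : Matrix (Fin m) (Fin m) ℂ)
            * Matrix.diagonal (fun i => ((hA.1.eigenvalues i : ℝ) : ℂ))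
            * star (hA.1.eigenvectorUnitary : Matrix (Fin m) (Fin m) ℂ))
          * ((hB.1.eigenvectorUnitary : Matrix (Fin m) (Fin m) ℂ)
            * Matrix.diagonal (fun i => ((Real.log (hB.1.eigenvalues i) : ℝ) : ℂ))
            * star (hB.1.eigenvectorUnitary : Matrix (Fin m) (Fin m) ℂ)) := by
      rw [← hcfcB]
      exact congrArg (fun z => z * hB.1.cfc Real.log) eqUA
    rw [heq, trace_conj_mul_conj, Complex.re_sum]
    refine Finset.sum_congr rfl (fun i _ => ?_)
    rw [Complex.re_sum]
    simp
  have h3 : (A.trace).re = ∑ i, hA.1.eigenvalues i := by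
    rw [congrArg Matrix.trace eqUA, trace_unitary_conj_diag, Complex.re_sum]
    simp
  have h4 : (B.trace).re = ∑ j, hB.1.eigenvalues j := by
    rw [congrArg Matrix.trace eqVB, trace_unitary_conj_diag, Complex.re_sum]
    simp
  rw [h1, h2, h3, h4]
  exact hcore

example (f : Fin m → ℝ) : (RCLike.ofReal ∘ f : Fin m → ℂ) = fun i => ((f i : ℝ) : ℂ) := rfl

-- exp of Hermitian via spectral data
lemma exp_hermitian {H : Matrix (Fin m) (Fin m) ℂ} (hH : H.IsHermitian) :
    exp H = (hH.eigenvectorUnitary : Matrix (Fin m) (Fin m) ℂ)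
      * Matrix.diagonal (fun i => ((Real.exp (hH.eigenvalues i) : ℝ) : ℂ))
      * star (hH.eigenvectorUnitary : Matrix (Fin m) (Fin m) ℂ) := by
  set Um : Matrix (Fin m) (Fin m) ℂ := (hH.eigenvectorUnitary : Matrix (Fin m) (Fin m) ℂ)
  have hUU' : star Um * Um = 1 := (Matrix.mem_unitaryGroup_iff').mp hH.eigenvectorUnitary.2
  have hinv : Um⁻¹ = star Um := Matrix.inv_eq_left_inv hUU'
  have h1 : exp H = exp (Um * Matrix.diagonal (fun i => ((hH.eigenvalues i : ℝ) : ℂ)) * Um⁻¹) := by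
    rw [hinv]; exact congrArg exp hH.spectral_theorem
  have hunit : IsUnit Um :=
    ⟨⟨Um, star Um, (Matrix.mem_unitaryGroup_iff).mp hH.eigenvectorUnitary.2, hUU'⟩, rfl⟩
  have h2 := Matrix.exp_conj Um (Matrix.diagonal fun i => ((hH.eigenvalues i : ℝ) : ℂ)) hunit
  rw [h1, h2, hinv, Matrix.exp_diagonal, Pi.exp_def]
  simp only [Complex.ofReal_exp, ← Complex.exp_eq_exp_ℂ]

lemma cfc_log_of_gibbs {H : Matrix (Fin m) (Fin m) ℂ} (hH : H.IsHermitian)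
    {ρhat : Matrix (Fin m) (Fin m) ℂ}
    (hform : ρhat = (((Real.exp 1)⁻¹ : ℝ) : ℂ) • exp H)
    (hρher : ρhat.IsHermitian) :
    hρher.cfc Real.log = H - 1 := by
  have hρeq : ρhat = hH.cfc (fun t => Real.exp (t - 1)) := by
    rw [hform, exp_hermitian hH, Matrix.IsHermitian.cfc]
    rw [← smul_mul_assoc, ← mul_smul_comm, ← Matrix.diagonal_smul]
    have harg : (((Real.exp 1)⁻¹ : ℝ) : ℂ) • (fun i => ((Real.exp (hH.eigenvalues i) : ℝ) : ℂ))
        = (RCLike.ofReal ∘ (fun t => Real.exp (t - 1)) ∘ hH.eigenvalues : Fin m → ℂ) := by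
      funext i
      show (((Real.exp 1)⁻¹ : ℝ) : ℂ) • ((Real.exp (hH.eigenvalues i) : ℝ) : ℂ)
          = ((Real.exp (hH.eigenvalues i - 1) : ℝ) : ℂ)
      rw [smul_eq_mul, ← Complex.ofReal_mul, Real.exp_sub, div_eq_inv_mul]
    rw [harg]
    rfl
  have hsa : IsSelfAdjoint H := hH
  have hsaρ : IsSelfAdjoint ρhat := hρher
  have e1 : _root_.cfc (fun t => Real.exp (t - 1)) H = ρhat := (hH.cfc_eq _).trans hρeq.symm
  have hg : ContinuousOn Real.log ((fun t => Real.exp (t - 1)) '' spectrum ℝ H) := by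
    apply Real.continuousOn_log.mono
    rintro y ⟨t, -, rfl⟩
    exact (Real.exp_pos _).ne'
  have hf : ContinuousOn (fun t : ℝ => Real.exp (t - 1)) (spectrum ℝ H) := by fun_prop
  have e2 : _root_.cfc Real.log ρhat = _root_.cfc (fun t => Real.log (Real.exp (t - 1))) H := by
    rw [← e1, ← cfc_comp' Real.log (fun t => Real.exp (t - 1)) H hg hf hsa]
  have e3 : _root_.cfc (fun t => Real.log (Real.exp (t - 1))) H
      = _root_.cfc (fun t : ℝ => t - 1) H :=
    cfc_congr (fun t _ => by rw [Real.log_exp])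
  have e4 : _root_.cfc (fun t : ℝ => t - 1) H = H - 1 := by
    have := cfc_sub (R := ℝ) (fun t : ℝ => t) (fun _ : ℝ => 1) H
    rw [this, cfc_id' ℝ H hsa, cfc_const_one ℝ H hsa]
  rw [← hρher.cfc_eq, e2, e3, e4]


lemma lstar_hermitian {N p q m : ℕ} (Gl : Fin N → Matrix (Fin p) (Fin m) ℂ)
    (Gr : Fin N → Matrix (Fin m) (Fin q) ℂ) (lam : Matrix (Fin p) (Fin q) ℂ) :
    (Lstar Gl Gr lam).IsHermitian := by
  unfold Lstar
  rw [Matrix.IsHermitian, Matrix.conjTranspose_smul, Matrix.conjTranspose_add,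
    Matrix.conjTranspose_conjTranspose]
  rw [show star ((1:ℂ)/2) = (1:ℂ)/2 by norm_num]
  rw [add_comm]

lemma lmap_sub {N p q m : ℕ} (Gl : Fin N → Matrix (Fin p) (Fin m) ℂ)
    (Gr : Fin N → Matrix (Fin m) (Fin q) ℂ) (X Y : Matrix (Fin m) (Fin m) ℂ) :
    Lmap Gl Gr (X - Y) = Lmap Gl Gr X - Lmap Gl Gr Y := by
  unfold Lmap
  rw [← Finset.sum_sub_distrib]
  refine Finset.sum_congr rfl (fun k _ => ?_)
  rw [Matrix.mul_sub, Matrix.sub_mul]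

lemma orth {N p q m : ℕ} (Gl : Fin N → Matrix (Fin p) (Fin m) ℂ)
    (Gr : Fin N → Matrix (Fin m) (Fin q) ℂ) (lam : Matrix (Fin p) (Fin q) ℂ)
    {Δ : Matrix (Fin m) (Fin m) ℂ} (hΔ : Δ.IsHermitian)
    (hL : Lmap Gl Gr Δ = 0) : (Δ * Lstar Gl Gr lam).trace = 0 := by
  set M := ∑ k, (Gl k)ᴴ * lam * (Gr k)ᴴ with hM
  have h1 : (Δ * Mᴴ).trace = 0 := by
    have hMH : Mᴴ = ∑ k, Gr k * lamᴴ * Gl k := by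
      rw [hM, Matrix.conjTranspose_sum]
      refine Finset.sum_congr rfl (fun k _ => ?_)
      simp only [Matrix.conjTranspose_mul, Matrix.conjTranspose_conjTranspose]
      rw [Matrix.mul_assoc]
    rw [hMH, Matrix.mul_sum, Matrix.trace_sum]
    have hterm : ∀ k, (Δ * (Gr k * lamᴴ * Gl k)).trace = ((Gl k * Δ * Gr k) * lamᴴ).trace := by
      intro k
      rw [← Matrix.mul_assoc, Matrix.trace_mul_cycle, ← Matrix.mul_assoc]
    rw [Finset.sum_congr rfl (fun k _ => hterm k), ← Matrix.trace_sum, ← Matrix.sum_mul]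
    rw [show (∑ k, Gl k * Δ * Gr k) = Lmap Gl Gr Δ from rfl, hL, Matrix.zero_mul,
      Matrix.trace_zero]
  have h2 : (Δ * M).trace = 0 := by
    have hst : star ((Δ * M).trace) = ((Δ * M)ᴴ).trace := (Matrix.trace_conjTranspose _).symm
    rw [Matrix.conjTranspose_mul, hΔ.eq, Matrix.trace_mul_comm Mᴴ Δ, h1] at hst
    exact star_eq_zero.mp hst
  show (Δ * ((1/2 : ℂ) • (M + Mᴴ))).trace = 0
  rw [Matrix.mul_smul, Matrix.trace_smul, Matrix.mul_add, Matrix.trace_add, h1, h2]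
  simp

/-- if `ρ̂ = (1/e) exp (−L*(λ))` for some `λ`, and `L ρ̂ = R`, then `ρ̂` is the
unique minimizer of `ρ ↦ trace (ρ log ρ)` over Hermitian positive definite `ρ` with
`L ρ = R`. -/
theorem unique_minimizer_traceRhoLogRho {N p q m : ℕ}
    (Gl : Fin N → Matrix (Fin p) (Fin m) ℂ) (Gr : Fin N → Matrix (Fin m) (Fin q) ℂ)
    (R : Matrix (Fin p) (Fin q) ℂ) (lam : Matrix (Fin p) (Fin q) ℂ)
    (ρhat : Matrix (Fin m) (Fin m) ℂ)
    (hform : ρhat = (((Real.exp 1)⁻¹ : ℝ) : ℂ) • exp (-(Lstar Gl Gr lam)))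
    (hmatch : Lmap Gl Gr ρhat = R) :
    ∀ ρ : Matrix (Fin m) (Fin m) ℂ, ρ.PosDef → Lmap Gl Gr ρ = R → ρ ≠ ρhat →
      traceRhoLogRho ρhat < traceRhoLogRho ρ := by
  intro ρ hρPD hρR hρne
  have hH : (Lstar Gl Gr lam).IsHermitian := lstar_hermitian Gl Gr lam
  have hA : (-(Lstar Gl Gr lam)).IsHermitian := hH.neg
  set A : Matrix (Fin m) (Fin m) ℂ := -(Lstar Gl Gr lam) with hAdef
  -- explicit form of ρhat
  have hρeq : ρhat = (hA.eigenvectorUnitary : Matrix (Fin m) (Fin m) ℂ)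
      * Matrix.diagonal (fun i => ((Real.exp (hA.eigenvalues i - 1) : ℝ) : ℂ))
      * star (hA.eigenvectorUnitary : Matrix (Fin m) (Fin m) ℂ) := by
    rw [hform, exp_hermitian hA]
    rw [← smul_mul_assoc, ← mul_smul_comm, ← Matrix.diagonal_smul]
    have harg : (((Real.exp 1)⁻¹ : ℝ) : ℂ) • (fun i => ((Real.exp (hA.eigenvalues i) : ℝ) : ℂ))
        = (fun i => ((Real.exp (hA.eigenvalues i - 1) : ℝ) : ℂ)) := by
      funext i
      show (((Real.exp 1)⁻¹ : ℝ) : ℂ) • ((Real.exp (hA.eigenvalues i) : ℝ) : ℂ)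
          = ((Real.exp (hA.eigenvalues i - 1) : ℝ) : ℂ)
      rw [smul_eq_mul, ← Complex.ofReal_mul, Real.exp_sub, div_eq_inv_mul]
    rw [harg]
  have hρhatPD : ρhat.PosDef := by
    rw [hρeq]
    refine posdef_unitary_conj ?_ hA.eigenvectorUnitary
    refine Matrix.PosDef.diagonal (fun i => ?_)
    exact Complex.zero_lt_real.mpr (Real.exp_pos _)
  have hlog : hρhatPD.1.cfc Real.log = A - 1 := cfc_log_of_gibbs hA hform hρhatPD.1
  -- orthogonality
  have hL0 : Lmap Gl Gr (ρ - ρhat) = 0 := by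
    rw [lmap_sub, hρR, hmatch, sub_self]
  have hΔher : (ρ - ρhat).IsHermitian := hρPD.1.sub hρhatPD.1
  have horth : ((ρ - ρhat) * Lstar Gl Gr lam).trace = 0 := orth Gl Gr lam hΔher hL0
  have htrA : (ρ * A).trace = (ρhat * A).trace := by
    have h1 : (ρ - ρhat) * Lstar Gl Gr lam = ρ * Lstar Gl Gr lam - ρhat * Lstar Gl Gr lam := by
      rw [Matrix.sub_mul]
    rw [h1, Matrix.trace_sub, sub_eq_zero] at horth
    rw [hAdef]
    simp only [Matrix.mul_neg, Matrix.trace_neg, horth]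
  -- Klein
  have hKlein := klein_matrix hρPD hρhatPD hρne
  rw [hlog] at hKlein
  -- unfold traceRhoLogRho
  unfold traceRhoLogRho
  rw [dif_pos hρPD.1, dif_pos hρhatPD.1, hlog]
  -- expand the (A - 1) traces
  have hexp : ∀ X : Matrix (Fin m) (Fin m) ℂ, (X * (A - 1)).trace = (X * A).trace - X.trace := by
    intro X
    rw [Matrix.mul_sub, Matrix.trace_sub, Matrix.mul_one]
  rw [hexp] at hKlein
  rw [htrA] at hKlein
  rw [hexp]
  rw [Complex.sub_re] at hKlein ⊢
  linarith
end
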